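/- arXiv:math/0109074 — 6 statements merged into one kernel-verified Lean document; each statement's English description precedes it below -/
import Mathlib

section
/- Let A be an n×n real matrix, b a nonzero vector of ℝⁿ, and λ > 0. If λ^{-m} A^m b → 0 as m → ∞, then the local spectral radius ρ_b(A) := limsup_{m→∞} ‖A^m b‖^{1/m} satisfies ρ_b(A) < λ. -/
open Filter Matrix
open scoped Topology

/-- The local spectral radius of `A` at `b`, defined as `limsup ‖A^m b‖^(1/m)`. -/
noncomputable def localRho {n : ℕ} (A : Matrix (Fin n) (Fin n) ℝ) (b : Fin n → ℝ) : ℝ :=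
  limsup (fun m : ℕ => ‖(A ^ m).mulVec b‖ ^ ((1 : ℝ) / m)) atTop

set_option maxHeartbeats 1000000 in
theorem stmt1 {n : ℕ} (A : Matrix (Fin n) (Fin n) ℝ) (b : Fin n → ℝ) (hb : b ≠ 0)
    (lam : ℝ) (hlam : 0 < lam)
    (h : Tendsto (fun m : ℕ => lam⁻¹ ^ m • (A ^ m).mulVec b) atTop (𝓝 0)) :
    localRho A b < lam := by
  classical
  set f : (Fin n → ℝ) →ₗ[ℝ] (Fin n → ℝ) := A.mulVecLin with hfdef
  have hpow : ∀ (m : ℕ) (v : Fin n → ℝ), (A ^ m).mulVec v = (f ^ m) v := by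
    intro m
    induction m with
    | zero => intro v; simp
    | succ m ih =>
      intro v
      rw [pow_succ', ← Matrix.mulVec_mulVec, pow_succ', Module.End.mul_apply, ← ih]
      rfl
  have h : Tendsto (fun m : ℕ => lam⁻¹ ^ m • (f ^ m) b) atTop (𝓝 0) := by
    simpa [hpow] using h
  set V : Submodule ℝ (Fin n → ℝ) :=
    Submodule.span ℝ (Set.range fun k : ℕ => (f ^ k) b) with hVdef
  have hgen : ∀ k : ℕ, (f ^ k) b ∈ V := fun k => Submodule.subset_span ⟨k, rfl⟩
  have hmapsTo : ∀ v ∈ V, f v ∈ V := by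
    intro v hv
    induction hv using Submodule.span_induction with
    | mem x hx =>
      obtain ⟨k, rfl⟩ := hx
      have : f ((f ^ k) b) = (f ^ (k + 1)) b := by
        rw [pow_succ', Module.End.mul_apply]
      rw [this]; exact hgen _
    | zero => simp
    | add x y hx hy ihx ihy => rw [map_add]; exact V.add_mem ihx ihy
    | smul a x hx ihx => rw [_root_.map_smul]; exact V.smul_mem a ihx
  have hmapsTo' : ∀ (m : ℕ), ∀ v ∈ V, (f ^ m) v ∈ V := by
    intro m
    induction m with
    | zero => intro v hv; simpa using hv
    | succ m ih =>
      intro v hv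
      rw [pow_succ, Module.End.mul_apply]
      exact ih _ (hmapsTo _ hv)
  -- pointwise convergence on V
  have htend : ∀ v ∈ V, Tendsto (fun m : ℕ => lam⁻¹ ^ m • (f ^ m) v) atTop (𝓝 0) := by
    intro v hv
    induction hv using Submodule.span_induction with
    | mem x hx =>
      obtain ⟨k, rfl⟩ := hx
      have h1 : Tendsto (fun m : ℕ => lam⁻¹ ^ (m + k) • (f ^ (m + k)) b) atTop (𝓝 0) :=
        h.comp (tendsto_add_atTop_nat k)
      have h2 : Tendsto (fun m : ℕ => lam ^ k • lam⁻¹ ^ (m + k) • (f ^ (m + k)) b) atTop (𝓝 0) := by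
        simpa using h1.const_smul (lam ^ k)
      convert h2 using 2 with m
      rw [smul_smul, pow_add f, Module.End.mul_apply]
      congr 1
      rw [pow_add, mul_comm (lam⁻¹ ^ m), ← mul_assoc, ← mul_pow,
        mul_inv_cancel₀ hlam.ne', one_pow, one_mul]
    | zero => simpa using tendsto_const_nhds
    | add x y hx hy ihx ihy =>
      have := ihx.add ihy
      simp only [map_add, smul_add] at this ⊢
      simpa using this
    | smul a x hx ihx =>
      have := ihx.const_smul a
      simp only [_root_.map_smul] at this ⊢
      rw [smul_zero] at this
      convert this using 2 with m
      rw [smul_comm]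
  -- basis machinery
  set d := Module.finrank ℝ V with hd
  set β : Module.Basis (Fin d) ℝ V := Module.finBasis ℝ V with hβ
  set L : V →L[ℝ] (Fin d → ℝ) := LinearMap.toContinuousLinearMap β.equivFun.toLinearMap with hL
  set C : ℝ := ‖L‖ + 1 with hC
  have hCpos : 0 < C := by positivity
  have hcoord : ∀ (v : V) (i : Fin d), |β.equivFun v i| ≤ C * ‖v‖ := by
    intro v i
    have h1 : |β.equivFun v i| ≤ ‖L v‖ := by
      have := norm_le_pi_norm (L v) i
      simpa [hL, Real.norm_eq_abs] using this
    refine h1.trans ((L.le_opNorm v).trans ?_)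
    have : ‖L‖ ≤ C := by rw [hC]; linarith
    exact mul_le_mul_of_nonneg_right this (norm_nonneg _)
  set ε : ℝ := 1 / (2 * C * (d + 1)) with hε
  have hεpos : 0 < ε := by positivity
  -- choose m₀
  have hev : ∀ᶠ m : ℕ in atTop, (∀ i : Fin d, ‖lam⁻¹ ^ m • (f ^ m) ((β i : V) : Fin n → ℝ)‖ ≤ ε) ∧ 1 ≤ m := by
    refine Filter.Eventually.and ?_ (eventually_ge_atTop 1)
    rw [eventually_all]
    intro i
    have hti : Tendsto (fun m : ℕ => ‖lam⁻¹ ^ m • (f ^ m) ((β i : V) : Fin n → ℝ)‖) atTop (𝓝 0) := by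
      simpa using (htend _ (β i).2).norm
    exact hti.eventually_le_const hεpos
  obtain ⟨m₀, hm₀ε, hm₀1⟩ := hev.exists
  have hm₀pos : 0 < m₀ := hm₀1
  -- contraction on V
  have hcon : ∀ v ∈ V, ‖(f ^ m₀) v‖ ≤ (1 / 2) * lam ^ m₀ * ‖v‖ := by
    intro v hv
    set w : V := ⟨v, hv⟩ with hw
    have hrepr : v = ∑ i : Fin d, β.equivFun w i • ((β i : V) : Fin n → ℝ) := by
      have := β.sum_equivFun w
      have := congrArg (Subtype.val : V → (Fin n → ℝ)) this
      simp only [Submodule.coe_sum, Submodule.coe_smul] at this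
      exact this.symm
    have key : ‖lam⁻¹ ^ m₀ • (f ^ m₀) v‖ ≤ (1 / 2) * ‖v‖ := by
      have h1 : lam⁻¹ ^ m₀ • (f ^ m₀) v
          = ∑ i : Fin d, β.equivFun w i • (lam⁻¹ ^ m₀ • (f ^ m₀) ((β i : V) : Fin n → ℝ)) := by
        rw [hrepr, map_sum, Finset.smul_sum]
        congr 1
        funext i
        rw [_root_.map_smul, smul_comm]
      rw [h1]
      calc ‖∑ i : Fin d, β.equivFun w i • (lam⁻¹ ^ m₀ • (f ^ m₀) ((β i : V) : Fin n → ℝ))‖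
          ≤ ∑ i : Fin d, ‖β.equivFun w i • (lam⁻¹ ^ m₀ • (f ^ m₀) ((β i : V) : Fin n → ℝ))‖ :=
            norm_sum_le _ _
        _ ≤ ∑ i : Fin d, (C * ‖v‖) * ε := by
            refine Finset.sum_le_sum fun i _ => ?_
            rw [norm_smul, Real.norm_eq_abs]
            have h2 := hcoord w i
            have h3 := hm₀ε i
            have hnv : ‖w‖ = ‖v‖ := rfl
            rw [hnv] at h2
            exact mul_le_mul h2 h3 (norm_nonneg _) (by positivity)
        _ = d * ((C * ‖v‖) * ε) := by
            rw [Finset.sum_const, Finset.card_univ, Fintype.card_fin, nsmul_eq_mul]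
        _ ≤ (1 / 2) * ‖v‖ := by
            rw [hε, mul_one_div, ← mul_div_assoc, div_le_iff₀ (by positivity)]
            have h5 : (0:ℝ) ≤ ‖v‖ := norm_nonneg _
            have h6 : (0:ℝ) ≤ (d:ℝ) := Nat.cast_nonneg d
            nlinarith [mul_nonneg hCpos.le h5]
    have hnorm : ‖lam⁻¹ ^ m₀ • (f ^ m₀) v‖ = lam⁻¹ ^ m₀ * ‖(f ^ m₀) v‖ := by
      rw [norm_smul, Real.norm_eq_abs, abs_pow, abs_of_pos (inv_pos.mpr hlam)]
    rw [hnorm] at key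
    have hlp : 0 < lam ^ m₀ := by positivity
    calc ‖(f ^ m₀) v‖ = lam ^ m₀ * (lam⁻¹ ^ m₀ * ‖(f ^ m₀) v‖) := by
          rw [← mul_assoc, ← mul_pow, mul_inv_cancel₀ hlam.ne', one_pow, one_mul]
      _ ≤ lam ^ m₀ * ((1/2) * ‖v‖) := by
          exact mul_le_mul_of_nonneg_left key hlp.le
      _ = (1/2) * lam ^ m₀ * ‖v‖ := by ring
  -- iterate the contraction
  have hiter : ∀ (q : ℕ), ∀ v ∈ V, ‖(f ^ (m₀ * q)) v‖ ≤ ((1/2) * lam ^ m₀) ^ q * ‖v‖ := by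
    intro q
    induction q with
    | zero => intro v hv; simp
    | succ q ih =>
      intro v hv
      have hsplit : (f ^ (m₀ * (q + 1))) v = (f ^ (m₀ * q)) ((f ^ m₀) v) := by
        rw [← Module.End.mul_apply, ← pow_add, Nat.mul_succ]
      rw [hsplit]
      calc ‖(f ^ (m₀ * q)) ((f ^ m₀) v)‖
          ≤ ((1/2) * lam ^ m₀) ^ q * ‖(f ^ m₀) v‖ := ih _ (hmapsTo' m₀ v hv)
        _ ≤ ((1/2) * lam ^ m₀) ^ q * ((1/2) * lam ^ m₀ * ‖v‖) := by
            refine mul_le_mul_of_nonneg_left (hcon v hv) ?_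
            positivity
        _ = ((1/2) * lam ^ m₀) ^ (q + 1) * ‖v‖ := by ring
  -- geometric bound
  set K : ℝ := 1 + ∑ r ∈ Finset.range m₀, ‖(f ^ r) b‖ with hK
  have hK1 : (1:ℝ) ≤ K := by
    have : (0:ℝ) ≤ ∑ r ∈ Finset.range m₀, ‖(f ^ r) b‖ :=
      Finset.sum_nonneg fun _ _ => norm_nonneg _
    linarith
  have hKr : ∀ r < m₀, ‖(f ^ r) b‖ ≤ K := by
    intro r hr
    have := Finset.single_le_sum (f := fun r => ‖(f ^ r) b‖)
      (fun i _ => norm_nonneg _) (Finset.mem_range.mpr hr)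
    linarith
  set μ : ℝ := lam * (1/2 : ℝ) ^ ((1:ℝ)/m₀) with hμ
  have hμpos : 0 < μ := by
    apply mul_pos hlam
    exact Real.rpow_pos_of_pos (by norm_num) _
  have hμlt : μ < lam := by
    have h1 : (1/2 : ℝ) ^ ((1:ℝ)/m₀) < 1 := by
      apply Real.rpow_lt_one (by norm_num) (by norm_num)
      positivity
    calc μ = lam * (1/2 : ℝ) ^ ((1:ℝ)/m₀) := rfl
      _ < lam * 1 := by exact mul_lt_mul_of_pos_left h1 hlam
      _ = lam := mul_one lam
  have hμpow : μ ^ m₀ = (1/2) * lam ^ m₀ := by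
    rw [hμ, mul_pow, ← Real.rpow_natCast ((1/2 : ℝ) ^ ((1:ℝ)/m₀)) m₀, ← Real.rpow_mul (by norm_num)]
    rw [one_div_mul_cancel (by exact_mod_cast hm₀pos.ne' : (m₀:ℝ) ≠ 0), Real.rpow_one]
    ring
  set D : ℝ := max 1 (μ⁻¹ ^ m₀) with hD
  have hD1 : (1:ℝ) ≤ D := le_max_left _ _
  have hgeom : ∀ m : ℕ, ‖(f ^ m) b‖ ≤ (K * D) * μ ^ m := by
    intro m
    set q := m / m₀ with hq
    set r := m % m₀ with hr
    have hmr : m₀ * q + r = m := Nat.div_add_mod m m₀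
    have hrlt : r < m₀ := Nat.mod_lt _ hm₀pos
    have hsplit : (f ^ m) b = (f ^ (m₀ * q)) ((f ^ r) b) := by
      rw [← Module.End.mul_apply, ← pow_add, hmr]
    have h1 : ‖(f ^ m) b‖ ≤ μ ^ (m₀ * q) * K := by
      rw [hsplit]
      calc ‖(f ^ (m₀ * q)) ((f ^ r) b)‖
          ≤ ((1/2) * lam ^ m₀) ^ q * ‖(f ^ r) b‖ := hiter q _ (hgen r)
        _ ≤ ((1/2) * lam ^ m₀) ^ q * K := by
            refine mul_le_mul_of_nonneg_left (hKr r hrlt) ?_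
            positivity
        _ = μ ^ (m₀ * q) * K := by rw [← hμpow, ← pow_mul]
    have h2 : μ ^ (m₀ * q) ≤ μ ^ m * D := by
      have heq : μ ^ (m₀ * q) = μ ^ m * μ⁻¹ ^ r := by
        rw [← hmr, pow_add, inv_pow, mul_assoc, mul_inv_cancel₀ (by positivity), mul_one]
      rw [heq]
      refine mul_le_mul_of_nonneg_left ?_ (by positivity)
      rcases le_or_gt μ⁻¹ 1 with hle | hgt
      · exact le_trans (pow_le_one₀ (by positivity) hle) hD1
      · exact le_trans (pow_le_pow_right₀ hgt.le hrlt.le) (le_max_right _ _)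
    calc ‖(f ^ m) b‖ ≤ μ ^ (m₀ * q) * K := h1
      _ ≤ (μ ^ m * D) * K := mul_le_mul_of_nonneg_right h2 (by linarith)
      _ = (K * D) * μ ^ m := by ring
  -- conclude on the limsup
  set ρ' : ℝ := (μ + lam) / 2 with hρ'
  have hμρ : μ < ρ' := by rw [hρ']; linarith
  have hρlam : ρ' < lam := by rw [hρ']; linarith
  have hKD1 : (1:ℝ) ≤ K * D := one_le_mul_of_one_le_of_one_le hK1 hD1
  have hKDpos : (0:ℝ) < K * D := by linarith
  have t2 : Tendsto (fun m : ℕ => (K * D : ℝ) ^ ((1:ℝ)/m) * μ) atTop (𝓝 μ) := by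
    have t1 : Tendsto (fun m : ℕ => (1:ℝ)/m) atTop (𝓝 0) :=
      tendsto_one_div_atTop_nhds_zero_nat
    have := (Filter.Tendsto.rpow (tendsto_const_nhds (x := (K*D:ℝ))) t1 (Or.inl hKDpos.ne')).mul_const μ
    simpa using this
  have hevle : ∀ᶠ m : ℕ in atTop, ‖(A ^ m).mulVec b‖ ^ ((1:ℝ)/m) ≤ ρ' := by
    have hev1 : ∀ᶠ m : ℕ in atTop, (K * D : ℝ) ^ ((1:ℝ)/m) * μ < ρ' :=
      t2.eventually_lt_const hμρ
    filter_upwards [hev1, eventually_ge_atTop 1] with m hm hm1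
    have hmpos : (0:ℝ) < m := by exact_mod_cast hm1
    have hstep : ‖(A ^ m).mulVec b‖ ^ ((1:ℝ)/m) ≤ ((K * D) * μ ^ m) ^ ((1:ℝ)/m) := by
      refine Real.rpow_le_rpow (norm_nonneg _) ?_ (by positivity)
      rw [hpow]; exact hgeom m
    have heq : ((K * D) * μ ^ m) ^ ((1:ℝ)/m) = (K * D) ^ ((1:ℝ)/m) * μ := by
      rw [Real.mul_rpow (by positivity) (by positivity)]
      congr 1
      rw [← Real.rpow_natCast μ m, ← Real.rpow_mul hμpos.le]
      rw [mul_one_div_cancel hmpos.ne', Real.rpow_one]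
    exact le_of_lt (lt_of_le_of_lt (hstep.trans_eq heq) hm)
  have hlimsup : localRho A b ≤ ρ' := by
    apply Filter.limsup_le_of_le
    · exact isCoboundedUnder_le_of_le atTop fun m => Real.rpow_nonneg (norm_nonneg _) _
    · exact hevle
  exact lt_of_le_of_lt hlimsup hρlam
end

section
/- Let K be a proper cone in ℝⁿ (a closed convex cone with K ∩ (-K) = {0} and nonempty interior), let A be an n×n real matrix with AK ⊆ K, let b be a nonzero vector of K, and let λ > 0. If there exists x ∈ K with (λI - A)x = b, then the partial sums y_m = ∑_{j=0}^m λ^{-j-1} A^j b form a nondecreasing sequence in the partial order induced by K, bounded above by x, and hence converge. -/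
open Filter Matrix
open scoped Topology

/-- A proper cone in `ℝⁿ`: closed, convex, pointed, with nonempty interior. -/
structure IsProperCone {n : ℕ} (K : Set (Fin n → ℝ)) : Prop where
  convex : Convex ℝ K
  isClosed : IsClosed K
  smul_mem : ∀ c : ℝ, 0 ≤ c → ∀ x ∈ K, c • x ∈ K
  pointed : K ∩ (-K) = {0}
  full : (interior K).Nonempty

lemma IsProperCone.zero_mem {n : ℕ} {K : Set (Fin n → ℝ)} (hK : IsProperCone K) :
    (0 : Fin n → ℝ) ∈ K := by
  have h0 : (0 : Fin n → ℝ) ∈ K ∩ (-K) := by rw [hK.pointed]; rfl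
  exact h0.1

lemma IsProperCone.add_mem {n : ℕ} {K : Set (Fin n → ℝ)} (hK : IsProperCone K)
    {u v : Fin n → ℝ} (hu : u ∈ K) (hv : v ∈ K) : u + v ∈ K := by
  have h := hK.convex hu hv (by norm_num : (0:ℝ) ≤ 1/2) (by norm_num : (0:ℝ) ≤ 1/2)
    (by norm_num)
  have h2 := hK.smul_mem 2 (by norm_num) _ h
  have : (2 : ℝ) • ((1/2 : ℝ) • u + (1/2 : ℝ) • v) = u + v := by
    rw [smul_add, smul_smul, smul_smul]; norm_num
  rwa [this] at h2

/-- Normality of a proper cone: `0 ≤ u ≤ v` implies `‖u‖ ≤ C‖v‖`. -/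
lemma IsProperCone.normal {n : ℕ} {K : Set (Fin n → ℝ)} (hK : IsProperCone K) :
    ∃ C : ℝ, 0 < C ∧ ∀ u v : Fin n → ℝ, u ∈ K → v - u ∈ K → ‖u‖ ≤ C * ‖v‖ := by
  by_contra h
  push_neg at h
  choose u v hu hvu hlt using fun k : ℕ => h (k + 1) (by positivity)
  have hupos : ∀ k, 0 < ‖u k‖ := by
    intro k
    have h1 := hlt k
    have h2 : (0:ℝ) ≤ (k + 1 : ℝ) * ‖v k‖ := by positivity
    linarith
  set w : ℕ → Fin n → ℝ := fun k => ‖u k‖⁻¹ • u k with hw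
  set z : ℕ → Fin n → ℝ := fun k => ‖u k‖⁻¹ • v k with hz
  have hwK : ∀ k, w k ∈ K := fun k =>
    hK.smul_mem _ (inv_nonneg.2 (norm_nonneg _)) _ (hu k)
  have hzwK : ∀ k, z k - w k ∈ K := by
    intro k
    have : z k - w k = ‖u k‖⁻¹ • (v k - u k) := by rw [smul_sub]
    rw [this]
    exact hK.smul_mem _ (inv_nonneg.2 (norm_nonneg _)) _ (hvu k)
  have hwnorm : ∀ k, ‖w k‖ = 1 := by
    intro k
    rw [hw]
    simp only [norm_smul, norm_inv, norm_norm]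
    exact inv_mul_cancel₀ (hupos k).ne'
  have hznorm : ∀ k, ‖z k‖ ≤ 1 / (k + 1 : ℝ) := by
    intro k
    rw [hz]
    simp only [norm_smul, norm_inv, norm_norm]
    rw [inv_mul_le_iff₀ (hupos k), mul_one_div, le_div_iff₀ (by positivity), mul_comm]
    exact (hlt k).le
  have hz0 : Tendsto z atTop (𝓝 0) := by
    apply squeeze_zero_norm hznorm
    exact tendsto_one_div_add_atTop_nhds_zero_nat
  -- extract convergent subsequence of w
  have hwball : ∀ k, w k ∈ Metric.closedBall (0 : Fin n → ℝ) 1 := by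
    intro k
    simp [Metric.mem_closedBall, dist_zero_right, hwnorm k]
  obtain ⟨a, -, φ, hφ, hwa⟩ := tendsto_subseq_of_bounded Metric.isBounded_closedBall hwball
  have haK : a ∈ K := hK.isClosed.mem_of_tendsto hwa (Eventually.of_forall fun k => hwK (φ k))
  have hzφ : Tendsto (z ∘ φ) atTop (𝓝 0) := hz0.comp hφ.tendsto_atTop
  have hnegK : -a ∈ K := by
    have htend : Tendsto (fun k => z (φ k) - w (φ k)) atTop (𝓝 (0 - a)) :=
      Tendsto.sub hzφ hwa
    rw [zero_sub] at htend
    exact hK.isClosed.mem_of_tendsto htend (Eventually.of_forall fun k => hzwK (φ k))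
  have ha0 : a = 0 := by
    have : a ∈ K ∩ (-K) := ⟨haK, by simpa [Set.mem_neg] using hnegK⟩
    rw [hK.pointed] at this
    exact this
  have hanorm : ‖a‖ = 1 := by
    have h1 : Tendsto (fun k => ‖w (φ k)‖) atTop (𝓝 ‖a‖) := hwa.norm
    have h2 : (fun k => ‖w (φ k)‖) = fun _ => (1:ℝ) := funext fun k => hwnorm (φ k)
    rw [h2] at h1
    exact tendsto_nhds_unique h1 tendsto_const_nhds
  rw [ha0] at hanorm
  simp at hanorm

theorem stmt2 {n : ℕ} {K : Set (Fin n → ℝ)} (hK : IsProperCone K)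
    (A : Matrix (Fin n) (Fin n) ℝ) (hA : ∀ v ∈ K, A.mulVec v ∈ K)
    (b : Fin n → ℝ) (hb : b ∈ K) (hb0 : b ≠ 0) (lam : ℝ) (hlam : 0 < lam)
    (x : Fin n → ℝ) (hx : x ∈ K)
    (hsol : (lam • (1 : Matrix (Fin n) (Fin n) ℝ) - A).mulVec x = b) :
    (∀ m₁ m₂ : ℕ, m₁ ≤ m₂ →
      (∑ j ∈ Finset.range (m₂ + 1), lam⁻¹ ^ (j + 1) • (A ^ j).mulVec b) -
        (∑ j ∈ Finset.range (m₁ + 1), lam⁻¹ ^ (j + 1) • (A ^ j).mulVec b) ∈ K) ∧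
    (∀ m : ℕ, x - ∑ j ∈ Finset.range (m + 1), lam⁻¹ ^ (j + 1) • (A ^ j).mulVec b ∈ K) ∧
    (∃ L : Fin n → ℝ,
      Tendsto (fun m : ℕ => ∑ j ∈ Finset.range (m + 1), lam⁻¹ ^ (j + 1) • (A ^ j).mulVec b)
        atTop (𝓝 L)) := by
  set t : ℕ → Fin n → ℝ := fun j => lam⁻¹ ^ (j + 1) • (A ^ j).mulVec b with ht
  set y : ℕ → Fin n → ℝ := fun m => ∑ j ∈ Finset.range (m + 1), t j with hy
  have hb' : lam • x - A.mulVec x = b := by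
    rw [← hsol, Matrix.sub_mulVec, Matrix.smul_mulVec, Matrix.one_mulVec]
  have hpow_mem : ∀ j : ℕ, ∀ v ∈ K, (A ^ j).mulVec v ∈ K := by
    intro j
    induction j with
    | zero => intro v hv; simpa [Matrix.one_mulVec] using hv
    | succ j ih =>
      intro v hv
      rw [pow_succ', ← Matrix.mulVec_mulVec]
      exact hA _ (ih v hv)
  have ht_mem : ∀ j, t j ∈ K :=
    fun j => hK.smul_mem _ (by positivity) _ (hpow_mem j b hb)
  -- telescoping identity
  have hkey : ∀ j : ℕ, t j =
      lam⁻¹ ^ j • (A ^ j).mulVec x - lam⁻¹ ^ (j + 1) • (A ^ (j + 1)).mulVec x := by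
    intro j
    have hbx : (A ^ j).mulVec b = lam • (A ^ j).mulVec x - (A ^ (j + 1)).mulVec x := by
      rw [← hb', Matrix.mulVec_sub, Matrix.mulVec_smul, pow_succ, ← Matrix.mulVec_mulVec]
    rw [ht]
    simp only
    rw [hbx, smul_sub, smul_smul]
    congr 2
    rw [pow_succ, mul_assoc, inv_mul_cancel₀ hlam.ne', mul_one]
  have hsum : ∀ m : ℕ, y m = x - lam⁻¹ ^ (m + 1) • (A ^ (m + 1)).mulVec x := by
    intro m
    rw [hy]
    simp only
    calc ∑ j ∈ Finset.range (m + 1), t j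
        = ∑ j ∈ Finset.range (m + 1),
            (lam⁻¹ ^ j • (A ^ j).mulVec x - lam⁻¹ ^ (j + 1) • (A ^ (j + 1)).mulVec x) :=
          Finset.sum_congr rfl fun j _ => hkey j
      _ = lam⁻¹ ^ 0 • (A ^ 0).mulVec x - lam⁻¹ ^ (m + 1) • (A ^ (m + 1)).mulVec x :=
          Finset.sum_range_sub' _ _
      _ = x - lam⁻¹ ^ (m + 1) • (A ^ (m + 1)).mulVec x := by
          simp [Matrix.one_mulVec]
  have part1 : ∀ m₁ m₂ : ℕ, m₁ ≤ m₂ → y m₂ - y m₁ ∈ K := by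
    intro m₁ m₂ hm
    have : y m₂ - y m₁ = ∑ j ∈ Finset.Ico (m₁ + 1) (m₂ + 1), t j :=
      (Finset.sum_Ico_eq_sub _ (by omega)).symm
    rw [this]
    exact Finset.sum_induction t (· ∈ K) (fun a b ha hb => hK.add_mem ha hb) hK.zero_mem
      (fun j _ => ht_mem j)
  have part2 : ∀ m : ℕ, x - y m ∈ K := by
    intro m
    rw [hsum m]
    have : x - (x - lam⁻¹ ^ (m + 1) • (A ^ (m + 1)).mulVec x)
        = lam⁻¹ ^ (m + 1) • (A ^ (m + 1)).mulVec x := by abel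
    rw [this]
    exact hK.smul_mem _ (by positivity) _ (hpow_mem (m + 1) x hx)
  refine ⟨part1, part2, ?_⟩
  -- convergence
  obtain ⟨C, hC, hnorm⟩ := hK.normal
  have hbound : ∀ m, ‖y m - y 0‖ ≤ C * ‖x - y 0‖ := by
    intro m
    apply hnorm _ _ (part1 0 m (Nat.zero_le m))
    have : x - y 0 - (y m - y 0) = x - y m := by abel
    rw [this]
    exact part2 m
  have hball : ∀ m, y m ∈ Metric.closedBall (y 0) (C * ‖x - y 0‖) := by
    intro m
    rw [Metric.mem_closedBall, dist_eq_norm]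
    exact hbound m
  obtain ⟨L, -, φ, hφ, hyL⟩ := tendsto_subseq_of_bounded Metric.isBounded_closedBall hball
  refine ⟨L, ?_⟩
  rw [Metric.tendsto_atTop]
  intro ε hε
  have hyL' := Metric.tendsto_atTop.mp hyL
  obtain ⟨k₀, hk₀⟩ := hyL' (ε / (2 * C + 2)) (by positivity)
  refine ⟨φ k₀, fun m hm => ?_⟩
  set k₁ := max k₀ m with hk₁
  have hφk₁ : m ≤ φ k₁ := le_trans (le_max_right _ _) hφ.le_apply
  have h1 : dist (y (φ k₀)) L < ε / (2 * C + 2) := hk₀ k₀ le_rfl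
  have h2 : dist (y (φ k₁)) L < ε / (2 * C + 2) := hk₀ k₁ (le_max_left _ _)
  have hmem1 : y m - y (φ k₀) ∈ K := part1 _ _ hm
  have hmem2 : y (φ k₁) - y (φ k₀) - (y m - y (φ k₀)) ∈ K := by
    have : y (φ k₁) - y (φ k₀) - (y m - y (φ k₀)) = y (φ k₁) - y m := by abel
    rw [this]
    exact part1 _ _ hφk₁
  have hn : ‖y m - y (φ k₀)‖ ≤ C * ‖y (φ k₁) - y (φ k₀)‖ := hnorm _ _ hmem1 hmem2
  have h3 : ‖y (φ k₁) - y (φ k₀)‖ ≤ dist (y (φ k₁)) L + dist (y (φ k₀)) L := by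
    rw [dist_eq_norm, dist_eq_norm]
    calc ‖y (φ k₁) - y (φ k₀)‖ = ‖(y (φ k₁) - L) + (L - y (φ k₀))‖ := by abel_nf
      _ ≤ ‖y (φ k₁) - L‖ + ‖L - y (φ k₀)‖ := norm_add_le _ _
      _ = ‖y (φ k₁) - L‖ + ‖y (φ k₀) - L‖ := by rw [norm_sub_rev L]
  have h4 : dist (y m) L ≤ ‖y m - y (φ k₀)‖ + dist (y (φ k₀)) L := by
    rw [dist_eq_norm, dist_eq_norm]
    calc ‖y m - L‖ = ‖(y m - y (φ k₀)) + (y (φ k₀) - L)‖ := by abel_nf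
      _ ≤ _ := norm_add_le _ _
  have : dist (y m) L ≤ C * (2 * (ε / (2 * C + 2))) + ε / (2 * C + 2) := by
    nlinarith [dist_nonneg (x := y (φ k₀)) (y := L), dist_nonneg (x := y (φ k₁)) (y := L)]
  calc dist (y m) L ≤ C * (2 * (ε / (2 * C + 2))) + ε / (2 * C + 2) := this
    _ < ε := by
        have h2C : (0:ℝ) < 2 * C + 2 := by linarith
        have hd : ε / (2 * C + 2) * (2 * C + 2) = ε := div_mul_cancel₀ ε h2C.ne'
        have hdpos : 0 < ε / (2 * C + 2) := by positivity
        nlinarith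
end

section
/- Let K be a proper cone in ℝⁿ, A an n×n real matrix with AK ⊆ K, b a nonzero vector of K, and λ > 0. Then there exists x ∈ K with (λI - A)x = b if and only if the local spectral radius ρ_b(A) < λ. In that case x⁰ = ∑_{j=0}^∞ λ^{-j-1} A^j b is a solution. -/
open Filter Matrix
open scoped Topology

section Aux
open Set
variable {n : ℕ}


-- cone addition
lemma cone_add {K : Set (Fin n → ℝ)} (hconv : Convex ℝ K)
    (hsmul : ∀ c : ℝ, 0 ≤ c → ∀ x ∈ K, c • x ∈ K)
    {u v : Fin n → ℝ} (hu : u ∈ K) (hv : v ∈ K) : u + v ∈ K := by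
  have h := hconv hu hv (by norm_num : (0:ℝ) ≤ (1:ℝ)/2) (by norm_num : (0:ℝ) ≤ (1:ℝ)/2)
    (by norm_num)
  have h2 := hsmul 2 (by norm_num) _ h
  have : (2:ℝ) • ((1/2:ℝ) • u + (1/2:ℝ) • v) = u + v := by
    rw [smul_add, smul_smul, smul_smul]; norm_num
  rwa [this] at h2


lemma exists_pos_functional {K : Set (Fin n → ℝ)} (hconv : Convex ℝ K) (hcl : IsClosed K)
    (hsmul : ∀ c : ℝ, 0 ≤ c → ∀ x ∈ K, c • x ∈ K) (hpt : K ∩ (-K) = {0}) :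
    ∃ (φ : (Fin n → ℝ) →L[ℝ] ℝ) (ε : ℝ), 0 < ε ∧ ∀ v ∈ K, ε * ‖v‖ ≤ φ v := by
  classical
  have h0K : (0 : Fin n → ℝ) ∈ K := by
    have : (0 : Fin n → ℝ) ∈ ({0} : Set (Fin n → ℝ)) := rfl
    rw [← hpt] at this; exact this.1
  set S : Set (Fin n → ℝ) := K ∩ Metric.sphere 0 1 with hS
  have hScompact : IsCompact S := (isCompact_sphere 0 1).inter_left hcl
  -- for each s in S, a functional positive at s and nonneg on K
  have hfun : ∀ s ∈ S, ∃ f : (Fin n → ℝ) →L[ℝ] ℝ, 0 < f s ∧ ∀ y ∈ K, 0 ≤ f y := by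
    intro s hs
    have hsK : s ∈ K := hs.1
    have hs1 : ‖s‖ = 1 := by simpa using hs.2
    have hsne : s ≠ 0 := by intro h; rw [h] at hs1; simp at hs1
    have hns : -s ∉ K := by
      intro h
      have : s ∈ K ∩ (-K) := ⟨hsK, by simpa using h⟩
      rw [hpt] at this
      exact hsne this
    obtain ⟨f, u, hfu, hu⟩ := geometric_hahn_banach_point_closed hconv hcl hns
    have hu0 : u < 0 := by
      have := hu 0 h0K
      simpa using this
    have hnonneg : ∀ y ∈ K, 0 ≤ f y := by
      intro y hy
      by_contra h
      push_neg at h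
      have hc : (0:ℝ) ≤ u / f y := div_nonneg_of_nonpos (le_of_lt hu0) (le_of_lt h)
      have := hu ((u / f y) • y) (hsmul _ hc _ hy)
      rw [ContinuousLinearMap.map_smul, smul_eq_mul, div_mul_cancel₀ _ (ne_of_lt h)] at this
      exact lt_irrefl _ this
    refine ⟨f, ?_, hnonneg⟩
    have : f (-s) < 0 := hfu.trans hu0
    rw [map_neg] at this
    linarith
  choose! f hf1 hf2 using hfun
  -- finite subcover
  have hcover : S ⊆ ⋃ s ∈ S, {v | 0 < f s v} := by
    intro s hs
    exact Set.mem_biUnion hs (hf1 s hs)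
  obtain ⟨t, htS, htfin, htcov⟩ := hScompact.elim_finite_subcover_image
    (fun s _ => isOpen_lt continuous_const (f s).continuous) hcover
  -- φ = sum of the f's over the finite set
  set φ : (Fin n → ℝ) →L[ℝ] ℝ := ∑ s ∈ htfin.toFinset, f s with hφ
  have hφnonneg : ∀ y ∈ K, 0 ≤ φ y := by
    intro y hy
    rw [hφ]
    simp only [ContinuousLinearMap.coe_sum', Finset.sum_apply]
    exact Finset.sum_nonneg fun s hsm => hf2 s (htS (htfin.mem_toFinset.mp hsm)) y hy
  have hφposS : ∀ s ∈ S, 0 < φ s := by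
    intro s hs
    obtain ⟨i, hi, his⟩ := Set.mem_iUnion₂.mp (htcov hs)
    rw [hφ]
    simp only [ContinuousLinearMap.coe_sum', Finset.sum_apply]
    refine Finset.sum_pos' (fun j hj => hf2 j (htS (htfin.mem_toFinset.mp hj)) s hs.1)
      ⟨i, htfin.mem_toFinset.mpr hi, his⟩
  by_cases hSne : S.Nonempty
  · obtain ⟨x0, hx0S, hx0min⟩ := hScompact.exists_isMinOn hSne (φ.continuous.continuousOn)
    refine ⟨φ, φ x0, hφposS x0 hx0S, fun v hv => ?_⟩
    rcases eq_or_ne v 0 with rfl | hvne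
    · simp
    · have hnv : 0 < ‖v‖ := norm_pos_iff.mpr hvne
      set w : Fin n → ℝ := ‖v‖⁻¹ • v with hw
      have hwK : w ∈ K := hsmul _ (inv_nonneg.mpr hnv.le) _ hv
      have hwS : w ∈ S := by
        refine ⟨hwK, ?_⟩
        simp only [mem_sphere_iff_norm, sub_zero, hw, norm_smul, norm_inv, norm_norm]
        field_simp
      have := hx0min hwS
      have hφw : φ x0 ≤ φ w := this
      have : φ v = ‖v‖ * φ w := by
        rw [hw, ContinuousLinearMap.map_smul, smul_eq_mul, ← mul_assoc, mul_inv_cancel₀ hnv.ne', one_mul]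
      rw [this, mul_comm (φ x0) ‖v‖]
      exact mul_le_mul_of_nonneg_right hφw hnv.le |>.trans_eq (by ring) |>.trans_eq' (by ring)
  · refine ⟨0, 1, one_pos, fun v hv => ?_⟩
    rcases eq_or_ne v 0 with rfl | hvne
    · simp
    · exfalso
      apply hSne
      have hnv : 0 < ‖v‖ := norm_pos_iff.mpr hvne
      refine ⟨‖v‖⁻¹ • v, hsmul _ (inv_nonneg.mpr hnv.le) _ hv, ?_⟩
      simp only [mem_sphere_iff_norm, sub_zero, norm_smul, norm_inv, norm_norm]
      field_simp

lemma mulVec_bound' (M : Matrix (Fin n) (Fin n) ℝ) :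
    ∃ C : ℝ, 1 ≤ C ∧ ∀ w : Fin n → ℝ, ‖M.mulVec w‖ ≤ C * ‖w‖ := by
  let f := LinearMap.toContinuousLinearMap M.mulVecLin
  refine ⟨max 1 ‖f‖, le_max_left _ _, fun w => ?_⟩
  calc ‖M.mulVec w‖ = ‖f w‖ := rfl
    _ ≤ ‖f‖ * ‖w‖ := f.le_opNorm w
    _ ≤ max 1 ‖f‖ * ‖w‖ := by gcongr; exact le_max_right _ _

lemma pow_mulVec_bound (M : Matrix (Fin n) (Fin n) ℝ) {C : ℝ} (hC1 : 0 ≤ C)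
    (hC : ∀ w : Fin n → ℝ, ‖M.mulVec w‖ ≤ C * ‖w‖) (m : ℕ) (w : Fin n → ℝ) :
    ‖(M ^ m).mulVec w‖ ≤ C ^ m * ‖w‖ := by
  induction m with
  | zero => simp [Matrix.one_mulVec]
  | succ k ih =>
    have h1 : (M ^ (k+1)).mulVec w = M.mulVec ((M ^ k).mulVec w) := by
      rw [Matrix.mulVec_mulVec, ← pow_succ']
    rw [h1]
    calc ‖M.mulVec ((M ^ k).mulVec w)‖ ≤ C * ‖(M ^ k).mulVec w‖ := hC _
      _ ≤ C * (C ^ k * ‖w‖) := mul_le_mul_of_nonneg_left ih hC1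
      _ = C ^ (k+1) * ‖w‖ := by ring

/-- the sequence of m-th roots of norms is bounded above -/
lemma roots_bounded (M : Matrix (Fin n) (Fin n) ℝ) (v : Fin n → ℝ) :
    IsBoundedUnder (· ≤ ·) atTop (fun m : ℕ => ‖(M ^ m).mulVec v‖ ^ ((1:ℝ)/m)) := by
  obtain ⟨C, hC1, hC⟩ := mulVec_bound' M
  have hC0 : (0:ℝ) < C := lt_of_lt_of_le one_pos hC1
  refine isBoundedUnder_of ⟨max 1 (C * (‖v‖ + 1)), fun m => ?_⟩
  rcases Nat.eq_zero_or_pos m with rfl | hm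
  · norm_num
  · have hmne : (m:ℝ) ≠ 0 := Nat.cast_ne_zero.mpr hm.ne'
    have hb : ‖(M ^ m).mulVec v‖ ≤ (C * (‖v‖ + 1)) ^ m := by
      calc ‖(M ^ m).mulVec v‖ ≤ C ^ m * ‖v‖ := pow_mulVec_bound M hC0.le hC m v
        _ ≤ C ^ m * (‖v‖ + 1) ^ m := by
            have h1 : ‖v‖ ≤ (‖v‖+1)^m := by
              calc ‖v‖ ≤ ‖v‖ + 1 := by linarith
                _ ≤ (‖v‖+1)^m := le_self_pow₀ (by linarith [norm_nonneg v]) hm.ne'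
            exact mul_le_mul_of_nonneg_left h1 (by positivity)
        _ = (C * (‖v‖ + 1)) ^ m := by rw [mul_pow]
    have key : ‖(M ^ m).mulVec v‖ ^ ((1:ℝ)/m) ≤ C * (‖v‖ + 1) := by
      rw [one_div]
      calc ‖(M ^ m).mulVec v‖ ^ ((m:ℝ)⁻¹) ≤ ((C * (‖v‖ + 1)) ^ m) ^ ((m:ℝ)⁻¹) :=
          Real.rpow_le_rpow (norm_nonneg _) hb (by positivity)
        _ = C * (‖v‖ + 1) := Real.pow_rpow_inv_natCast (by positivity) hm.ne'
    exact key.trans (le_max_right _ _)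

lemma tendsto_orbit_span (T : Matrix (Fin n) (Fin n) ℝ) (v : Fin n → ℝ)
    (h : Tendsto (fun m : ℕ => (T ^ m).mulVec v) atTop (𝓝 0)) :
    ∀ w ∈ Submodule.span ℝ (Set.range fun j : ℕ => (T ^ j).mulVec v),
      Tendsto (fun m : ℕ => (T ^ m).mulVec w) atTop (𝓝 0) := by
  intro w hw
  induction hw using Submodule.span_induction with
  | mem x hx =>
    obtain ⟨j, rfl⟩ := hx
    have hcomp : (fun m : ℕ => (T ^ m).mulVec ((T ^ j).mulVec v))
        = (fun m : ℕ => (T ^ m).mulVec v) ∘ (fun m => m + j) := by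
      funext m
      simp only [Function.comp_apply, Matrix.mulVec_mulVec, pow_add]
    rw [hcomp]
    exact h.comp (tendsto_add_atTop_nat j)
  | zero => simpa using tendsto_const_nhds
  | add x y hx hy ihx ihy =>
    have := ihx.add ihy
    simpa [Matrix.mulVec_add] using this
  | smul a x hx ihx =>
    have := ihx.const_smul a
    simpa [Matrix.mulVec_smul] using this

lemma L1 (T : Matrix (Fin n) (Fin n) ℝ) (v : Fin n → ℝ)
    (h : Tendsto (fun m : ℕ => (T ^ m).mulVec v) atTop (𝓝 0)) :
    limsup (fun m : ℕ => ‖(T ^ m).mulVec v‖ ^ ((1:ℝ)/m)) atTop < 1 := by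
  classical
  set W : Submodule ℝ (Fin n → ℝ) :=
    Submodule.span ℝ (Set.range fun j : ℕ => (T ^ j).mulVec v) with hWdef
  have hWtend := tendsto_orbit_span T v h
  -- basis of W
  set d := Module.finrank ℝ W with hd
  let B : Module.Basis (Fin d) ℝ W := Module.finBasis ℝ W
  -- coordinate functionals
  let ci : Fin d → (W →L[ℝ] ℝ) := fun i =>
    LinearMap.toContinuousLinearMap ((LinearMap.proj i).comp B.equivFun.toLinearMap)
  have hci : ∀ (i : Fin d) (w : W), |B.equivFun w i| ≤ ‖ci i‖ * ‖w‖ := by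
    intro i w
    have := (ci i).le_opNorm w
    simpa [ci, Real.norm_eq_abs] using this
  set C : ℝ := ∑ i, ‖ci i‖ with hC
  have hC0 : 0 ≤ C := Finset.sum_nonneg fun i _ => ContinuousLinearMap.opNorm_nonneg _
  -- decomposition bound
  have hdecomp : ∀ (m : ℕ) (w : W), ‖(T ^ m).mulVec (w : Fin n → ℝ)‖
      ≤ ∑ i, |B.equivFun w i| * ‖(T ^ m).mulVec (B i : Fin n → ℝ)‖ := by
    intro m w
    have hw : (w : Fin n → ℝ) = ∑ i, B.equivFun w i • (B i : Fin n → ℝ) := by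
      have := B.sum_equivFun w
      calc (w : Fin n → ℝ) = ((∑ i, B.equivFun w i • B i : W) : Fin n → ℝ) := by rw [this]
        _ = ∑ i, B.equivFun w i • (B i : Fin n → ℝ) := by
            push_cast
            rfl
    rw [hw]
    have : (T ^ m).mulVec (∑ i, B.equivFun w i • (B i : Fin n → ℝ))
        = ∑ i, B.equivFun w i • (T ^ m).mulVec (B i : Fin n → ℝ) := by
      rw [show ∀ u, (T ^ m).mulVec u = (T ^ m).mulVecLin u from fun u => rfl]
      rw [map_sum]
      simp [Matrix.mulVecLin_apply, Matrix.mulVec_smul]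
    rw [this]
    refine (norm_sum_le _ _).trans ?_
    apply Finset.sum_le_sum
    intro i _
    rw [norm_smul, Real.norm_eq_abs]
  -- uniform contraction step
  have hBiW : ∀ i, Tendsto (fun m : ℕ => (T ^ m).mulVec (B i : Fin n → ℝ)) atTop (𝓝 0) :=
    fun i => hWtend _ (B i).2
  have hev : ∀ᶠ m : ℕ in atTop, (∀ i : Fin d,
      ‖(T ^ m).mulVec (B i : Fin n → ℝ)‖ ≤ (2 * (C + 1))⁻¹) ∧ 1 ≤ m := by
    refine Filter.Eventually.and ?_ (eventually_ge_atTop 1)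
    rw [eventually_all]
    intro i
    have := (hBiW i).norm
    simp only [norm_zero] at this
    exact this.eventually_le_const (by positivity)
  obtain ⟨M, hM⟩ := hev.exists
  obtain ⟨hMsmall, hM1⟩ := hM
  have hM0 : 0 < M := hM1
  -- contraction on W
  have hcontr : ∀ w : W, ‖(T ^ M).mulVec (w : Fin n → ℝ)‖ ≤ (1/2) * ‖(w : Fin n → ℝ)‖ := by
    intro w
    refine (hdecomp M w).trans ?_
    have h1 : ∑ i, |B.equivFun w i| * ‖(T ^ M).mulVec (B i : Fin n → ℝ)‖
        ≤ ∑ i, (‖ci i‖ * ‖w‖) * (2 * (C + 1))⁻¹ := by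
      apply Finset.sum_le_sum
      intro i _
      exact mul_le_mul (hci i w) (hMsmall i) (norm_nonneg _)
        (by positivity)
    refine h1.trans ?_
    rw [← Finset.sum_mul, ← Finset.sum_mul, ← hC]
    have hnw : ‖w‖ = ‖(w : Fin n → ℝ)‖ := rfl
    rw [hnw]
    have hkey : C * (2 * (C + 1))⁻¹ ≤ 1/2 := by
      rw [inv_eq_one_div, mul_one_div, div_le_div_iff₀ (by positivity) (by norm_num)]
      linarith
    have hw0 : (0:ℝ) ≤ ‖(w : Fin n → ℝ)‖ := norm_nonneg _
    calc C * ‖(w : Fin n → ℝ)‖ * (2 * (C + 1))⁻¹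
        = ‖(w : Fin n → ℝ)‖ * (C * (2 * (C + 1))⁻¹) := by ring
      _ ≤ ‖(w : Fin n → ℝ)‖ * (1/2) := by nlinarith
      _ = 1/2 * ‖(w : Fin n → ℝ)‖ := by ring
  -- geometric decay along multiples of M
  have hMk : ∀ k : ℕ, ‖(T ^ (M * k)).mulVec v‖ ≤ (1/2)^k * ‖v‖ := by
    intro k
    induction k with
    | zero => simp [Matrix.one_mulVec]
    | succ j ih =>
      have hmem : (T ^ (M * j)).mulVec v ∈ W := by
        rw [hWdef]
        exact Submodule.subset_span ⟨M * j, rfl⟩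
      have step := hcontr ⟨(T ^ (M * j)).mulVec v, hmem⟩
      have heq : (T ^ M).mulVec ((T ^ (M * j)).mulVec v) = (T ^ (M * (j+1))).mulVec v := by
        rw [Matrix.mulVec_mulVec, ← pow_add]
        ring_nf
      rw [heq] at step
      calc ‖(T ^ (M * (j+1))).mulVec v‖ ≤ (1/2) * ‖(T ^ (M * j)).mulVec v‖ := step
        _ ≤ (1/2) * ((1/2)^j * ‖v‖) := by linarith
        _ = (1/2)^(j+1) * ‖v‖ := by ring
  -- full geometric bound
  obtain ⟨CT, hCT1, hCT⟩ := mulVec_bound' T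
  set D : ℝ := CT ^ M * ‖v‖ * 2 + 1 with hD
  have hD1 : 1 ≤ D := by
    have : 0 ≤ CT ^ M * ‖v‖ * 2 := by positivity
    linarith
  have hD0 : 0 < D := lt_of_lt_of_le one_pos hD1
  set q : ℝ := (1/2 : ℝ) ^ ((1:ℝ)/M) with hq
  have hq0 : 0 < q := Real.rpow_pos_of_pos (by norm_num) _
  have hq1 : q < 1 := Real.rpow_lt_one (by norm_num) (by norm_num) (by positivity)
  have hgeom : ∀ m : ℕ, ‖(T ^ m).mulVec v‖ ≤ D * q ^ m := by
    intro m
    have hsplit : ‖(T ^ m).mulVec v‖ ≤ CT ^ M * ((1/2)^(m / M) * ‖v‖) := by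
      have hmod : M * (m / M) + m % M = m := Nat.div_add_mod m M
      have h1 : (T ^ m).mulVec v = (T ^ (m % M)).mulVec ((T ^ (M * (m / M))).mulVec v) := by
        rw [Matrix.mulVec_mulVec, ← pow_add, Nat.mod_add_div]
      rw [h1]
      calc ‖(T ^ (m % M)).mulVec ((T ^ (M * (m / M))).mulVec v)‖
          ≤ CT ^ (m % M) * ‖(T ^ (M * (m / M))).mulVec v‖ :=
            pow_mulVec_bound T (by linarith) hCT _ _
        _ ≤ CT ^ M * ‖(T ^ (M * (m / M))).mulVec v‖ := by
            have := pow_le_pow_right₀ hCT1 (Nat.mod_lt m hM0).le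
            exact mul_le_mul_of_nonneg_right this (norm_nonneg _)
        _ ≤ CT ^ M * ((1/2)^(m / M) * ‖v‖) := by
            have := hMk (m / M)
            have hCTM : (0:ℝ) ≤ CT ^ M := by positivity
            exact mul_le_mul_of_nonneg_left this hCTM
    refine hsplit.trans ?_
    -- (1/2)^(m/M) ≤ 2 * q^m
    have hhalf : ((1/2 : ℝ))^(m / M) ≤ 2 * q ^ m := by
      have hqm : q ^ m = (1/2 : ℝ) ^ (((m:ℝ))/M) := by
        rw [hq, ← Real.rpow_natCast ((1/2:ℝ) ^ ((1:ℝ)/M)) m, ← Real.rpow_mul (by norm_num)]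
        congr 1
        field_simp
      have hkr : ((m:ℝ))/M - 1 ≤ ((m / M : ℕ) : ℝ) := by
        have h2 : m < M * (m / M + 1) := by
          calc m = M * (m/M) + m % M := (Nat.div_add_mod m M).symm
            _ < M * (m/M) + M := Nat.add_lt_add_left (Nat.mod_lt m hM0) _
            _ = M * (m/M + 1) := by ring
        have h3 : (m:ℝ) < M * ((m / M : ℕ) + 1) := by exact_mod_cast h2
        have hMr : (0:ℝ) < M := by exact_mod_cast hM0
        rw [sub_le_iff_le_add, div_le_iff₀ hMr]
        nlinarith
      have : ((1/2:ℝ))^(((m / M : ℕ)):ℝ) ≤ (1/2:ℝ) ^ (((m:ℝ))/M - 1) :=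
        Real.rpow_le_rpow_of_exponent_ge (by norm_num) (by norm_num) hkr
      rw [Real.rpow_natCast] at this
      refine this.trans ?_
      rw [Real.rpow_sub (by norm_num), Real.rpow_one, hqm]
      ring_nf
      exact le_refl _
    calc CT ^ M * ((1/2)^(m / M) * ‖v‖)
        ≤ CT ^ M * ((2 * q ^ m) * ‖v‖) := by
          have hCTM : (0:ℝ) ≤ CT ^ M := by positivity
          have := mul_le_mul_of_nonneg_right hhalf (norm_nonneg v)
          exact mul_le_mul_of_nonneg_left this hCTM
      _ = (CT ^ M * ‖v‖ * 2) * q ^ m := by ring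
      _ ≤ D * q ^ m := by
          have : (0:ℝ) ≤ q ^ m := by positivity
          nlinarith
  -- conclude limsup < 1
  set q' : ℝ := (1 + q)/2 with hq'
  have hqq' : q < q' := by rw [hq']; linarith
  have hq'1 : q' < 1 := by rw [hq']; linarith
  have htend : Tendsto (fun m : ℕ => D ^ ((1:ℝ)/m) * q) atTop (𝓝 q) := by
    have h1 : Tendsto (fun m : ℕ => D ^ ((1:ℝ)/m)) atTop (𝓝 1) := by
      have h2 : Tendsto (fun m : ℕ => (1:ℝ)/m) atTop (𝓝 0) :=
        tendsto_one_div_atTop_nhds_zero_nat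
      have := Filter.Tendsto.rpow (tendsto_const_nhds (x := D)) h2 (Or.inl hD0.ne')
      simpa only [Real.rpow_zero] using this
    have := h1.mul_const q
    simpa only [one_mul] using this
  have hev2 : ∀ᶠ m : ℕ in atTop, ‖(T ^ m).mulVec v‖ ^ ((1:ℝ)/m) ≤ q' := by
    filter_upwards [htend.eventually_lt_const hqq', eventually_ge_atTop 1] with m h1 h2
    have hm0 : m ≠ 0 := by omega
    calc ‖(T ^ m).mulVec v‖ ^ ((1:ℝ)/m) ≤ (D * q ^ m) ^ ((1:ℝ)/m) :=
        Real.rpow_le_rpow (norm_nonneg _) (hgeom m) (by positivity)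
      _ = D ^ ((1:ℝ)/m) * (q ^ m) ^ ((1:ℝ)/m) := Real.mul_rpow hD0.le (by positivity)
      _ = D ^ ((1:ℝ)/m) * q := by
          rw [one_div, Real.pow_rpow_inv_natCast hq0.le hm0]
      _ ≤ q' := h1.le
  have hcob : IsCoboundedUnder (· ≤ ·) atTop (fun m : ℕ => ‖(T ^ m).mulVec v‖ ^ ((1:ℝ)/m)) :=
    isCoboundedUnder_le_of_le atTop (x := 0) fun m => Real.rpow_nonneg (norm_nonneg _) _
  exact lt_of_le_of_lt (limsup_le_of_le hcob hev2) hq'1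

end Aux

theorem stmt3 {n : ℕ} {K : Set (Fin n → ℝ)} (hK : IsProperCone K)
    (A : Matrix (Fin n) (Fin n) ℝ) (hA : ∀ v ∈ K, A.mulVec v ∈ K)
    (b : Fin n → ℝ) (hb : b ∈ K) (hb0 : b ≠ 0) (lam : ℝ) (hlam : 0 < lam) :
    ((∃ x ∈ K, (lam • (1 : Matrix (Fin n) (Fin n) ℝ) - A).mulVec x = b) ↔
      localRho A b < lam) ∧
    (localRho A b < lam →
      ∃ x0 : Fin n → ℝ,
        Tendsto (fun m : ℕ => ∑ j ∈ Finset.range (m + 1), lam⁻¹ ^ (j + 1) • (A ^ j).mulVec b)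
          atTop (𝓝 x0) ∧
        x0 ∈ K ∧ (lam • (1 : Matrix (Fin n) (Fin n) ℝ) - A).mulVec x0 = b) := by
  have hlamne : lam ≠ 0 := hlam.ne'
  have h0K : (0 : Fin n → ℝ) ∈ K := by
    have : (0 : Fin n → ℝ) ∈ ({0} : Set (Fin n → ℝ)) := rfl
    rw [← hK.pointed] at this; exact this.1
  set B : Matrix (Fin n) (Fin n) ℝ := lam • (1 : Matrix (Fin n) (Fin n) ℝ) - A with hBdef
  have hBmul : ∀ w, B.mulVec w = lam • w - A.mulVec w := by
    intro w
    rw [hBdef, Matrix.sub_mulVec, Matrix.smul_mulVec, Matrix.one_mulVec]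
  have hAK : ∀ (j : ℕ), ∀ v ∈ K, (A ^ j).mulVec v ∈ K := by
    intro j
    induction j with
    | zero => intro v hv; simpa [Matrix.one_mulVec] using hv
    | succ k ih =>
      intro v hv
      have h1 : (A ^ (k+1)).mulVec v = A.mulVec ((A ^ k).mulVec v) := by
        rw [Matrix.mulVec_mulVec, ← pow_succ']
      rw [h1]
      exact hA _ (ih v hv)
  set c : ℕ → (Fin n → ℝ) := fun j => lam⁻¹ ^ (j+1) • (A ^ j).mulVec b with hcdef
  have hcK : ∀ j, c j ∈ K := fun j =>
    hK.smul_mem _ (by positivity) _ (hAK j b hb)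
  set g : ℕ → (Fin n → ℝ) := fun j => lam⁻¹ ^ j • (A ^ j).mulVec b with hgdef
  have hgc : ∀ j, g j = lam • c j := by
    intro j
    rw [hgdef, hcdef]
    simp only [smul_smul]
    congr 1
    rw [pow_succ]
    field_simp
  have hBc : ∀ j, B.mulVec (c j) = g j - g (j+1) := by
    intro j
    rw [hBmul, ← hgc]
    congr 1
    rw [hcdef, hgdef]
    simp only
    rw [Matrix.mulVec_smul, Matrix.mulVec_mulVec, ← pow_succ']
  -- second bullet : construction of the solution when localRho < lam
  have main2 : localRho A b < lam →
      ∃ x0 : Fin n → ℝ,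
        Tendsto (fun m : ℕ => ∑ j ∈ Finset.range (m + 1), lam⁻¹ ^ (j + 1) • (A ^ j).mulVec b)
          atTop (𝓝 x0) ∧
        x0 ∈ K ∧ B.mulVec x0 = b := by
    intro hrho
    set r : ℝ := (max (localRho A b) 0 + lam)/2 with hrdef
    have hmax : max (localRho A b) 0 < lam := max_lt hrho hlam
    have hr0 : 0 ≤ r := by
      have := le_max_right (localRho A b) 0
      rw [hrdef]; positivity
    have hrlam : r < lam := by rw [hrdef]; linarith
    have hrhor : localRho A b < r := by
      have h1 := le_max_left (localRho A b) 0
      rw [hrdef]; linarith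
    clear_value r
    have hev : ∀ᶠ m : ℕ in atTop, ‖(A ^ m).mulVec b‖ ^ ((1:ℝ)/m) < r :=
      eventually_lt_of_limsup_lt hrhor (roots_bounded A b)
    have hpow : ∀ᶠ m : ℕ in atTop, ‖(A ^ m).mulVec b‖ ≤ r ^ m := by
      filter_upwards [hev, eventually_ge_atTop 1] with m h1 h2
      have hm0 : m ≠ 0 := by omega
      have h3 : ‖(A ^ m).mulVec b‖ = (‖(A ^ m).mulVec b‖ ^ ((1:ℝ)/m)) ^ m := by
        rw [one_div, Real.rpow_inv_natCast_pow (norm_nonneg _) hm0]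
      rw [h3]
      exact pow_le_pow_left₀ (Real.rpow_nonneg (norm_nonneg _) _) h1.le m
    have hsumnorm : Summable (fun j => ‖c j‖) := by
      have hgeo : Summable (fun j : ℕ => lam⁻¹ * (r/lam) ^ j) := by
        refine (summable_geometric_of_lt_one (by positivity) ?_).mul_left _
        rw [div_lt_one hlam]; exact hrlam
      refine Summable.of_norm_bounded_eventually_nat hgeo ?_
      filter_upwards [hpow] with j hj
      have h1 : ‖c j‖ = lam⁻¹ ^ (j+1) * ‖(A ^ j).mulVec b‖ := by
        rw [hcdef]
        simp only [norm_smul, Real.norm_eq_abs]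
        congr 1
        rw [abs_of_pos (by positivity)]
      rw [Real.norm_eq_abs, abs_of_nonneg (norm_nonneg _), h1]
      calc lam⁻¹ ^ (j+1) * ‖(A ^ j).mulVec b‖ ≤ lam⁻¹ ^ (j+1) * r ^ j := by
            exact mul_le_mul_of_nonneg_left hj (by positivity)
        _ = lam⁻¹ * (r/lam) ^ j := by
            rw [pow_succ', mul_assoc, div_pow, inv_pow, inv_mul_eq_div]
            ring
      
    have hsum : Summable c := hsumnorm.of_norm
    set x0 : Fin n → ℝ := ∑' j, c j with hx0def
    have htends : Tendsto (fun m : ℕ => ∑ j ∈ Finset.range (m + 1), c j) atTop (𝓝 x0) :=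
      hsum.hasSum.tendsto_sum_nat.comp (tendsto_add_atTop_nat 1)
    have hmem : ∀ m : ℕ, ∑ j ∈ Finset.range (m + 1), c j ∈ K := by
      intro m
      induction m with
      | zero => simpa using hcK 0
      | succ k ih =>
        rw [Finset.sum_range_succ]
        exact cone_add hK.convex hK.smul_mem ih (hcK (k+1))
    have hx0K : x0 ∈ K := hK.isClosed.mem_of_tendsto htends (Eventually.of_forall hmem)
    have hc0 : Tendsto c atTop (𝓝 0) := hsum.tendsto_atTop_zero
    have hg0 : Tendsto g atTop (𝓝 0) := by
      have := hc0.const_smul lam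
      simp only [smul_zero] at this
      have heq : (fun j => lam • c j) = g := by funext j; rw [hgc]
      rwa [heq] at this
    have hcont : Continuous fun y : Fin n → ℝ => B.mulVec y := by
      have : (fun y : Fin n → ℝ => B.mulVec y) = B.mulVecLin := rfl
      rw [this]
      exact B.mulVecLin.continuous_of_finiteDimensional
    have h1 : Tendsto (fun m : ℕ => B.mulVec (∑ j ∈ Finset.range (m + 1), c j)) atTop
        (𝓝 (B.mulVec x0)) := (hcont.tendsto x0).comp htends
    have hBs : ∀ m : ℕ, B.mulVec (∑ j ∈ Finset.range (m + 1), c j) = b - g (m+1) := by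
      intro m
      have hmap : B.mulVec (∑ j ∈ Finset.range (m + 1), c j)
          = ∑ j ∈ Finset.range (m + 1), B.mulVec (c j) :=
        map_sum B.mulVecLin c (Finset.range (m+1))
      rw [hmap]
      have : ∑ j ∈ Finset.range (m + 1), B.mulVec (c j)
          = ∑ j ∈ Finset.range (m + 1), (g j - g (j+1)) := by
        apply Finset.sum_congr rfl
        intro j _
        exact hBc j
      rw [this, Finset.sum_range_sub']
      congr 1
      rw [hgdef]
      simp [Matrix.one_mulVec]
    have h2 : Tendsto (fun m : ℕ => B.mulVec (∑ j ∈ Finset.range (m + 1), c j)) atTop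
        (𝓝 (b - 0)) := by
      simp only [hBs]
      exact tendsto_const_nhds.sub (hg0.comp (tendsto_add_atTop_nat 1))
    have hsol : B.mulVec x0 = b := by
      have := tendsto_nhds_unique h1 h2
      simpa using this
    exact ⟨x0, htends, hx0K, hsol⟩
  -- backward direction : solvability implies localRho < lam
  have main1 : (∃ x ∈ K, B.mulVec x = b) → localRho A b < lam := by
    rintro ⟨x, hxK, hxeq⟩
    obtain ⟨φ, ε, hε, hφ⟩ :=
      exists_pos_functional hK.convex hK.isClosed hK.smul_mem hK.pointed
    have hxb : lam • x - A.mulVec x = b := by rw [← hBmul]; exact hxeq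
    set e : ℕ → (Fin n → ℝ) := fun m => lam⁻¹ ^ m • (A ^ m).mulVec x with hedef
    have heK : ∀ m, e m ∈ K := fun m =>
      hK.smul_mem _ (by positivity) _ (hAK m x hxK)
    have hdK : ∀ j, g j ∈ K := fun j =>
      hK.smul_mem _ (by positivity) _ (hAK j b hb)
    have hed : ∀ j, e j - e (j+1) = lam⁻¹ • g j := by
      intro j
      have h1 : (A ^ j).mulVec b = lam • (A ^ j).mulVec x - (A ^ (j+1)).mulVec x := by
        rw [← hxb, Matrix.mulVec_sub, Matrix.mulVec_smul, Matrix.mulVec_mulVec, ← pow_succ]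
      rw [hgdef, hedef]
      simp only [h1, smul_sub, smul_smul]
      congr 1
      · congr 1
        field_simp
      · congr 1
        rw [pow_succ']
    have hφg0 : ∀ j, 0 ≤ φ (g j) := by
      intro j
      have := hφ _ (hdK j)
      have h2 : (0:ℝ) ≤ ε * ‖g j‖ := by positivity
      linarith
    have hφe0 : ∀ m, 0 ≤ φ (e m) := by
      intro m
      have := hφ _ (heK m)
      have h2 : (0:ℝ) ≤ ε * ‖e m‖ := by positivity
      linarith
    have hstep : ∀ j, φ (e j) - φ (e (j+1)) = lam⁻¹ * φ (g j) := by
      intro j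
      rw [← map_sub, hed j, ContinuousLinearMap.map_smul, smul_eq_mul]
    have hanti : Antitone (fun m => φ (e m)) := by
      apply antitone_nat_of_succ_le
      intro j
      have h1 := hstep j
      have h2 := hφg0 j
      have h3 : 0 ≤ lam⁻¹ * φ (g j) := by positivity
      linarith
    have hconv : Tendsto (fun m => φ (e m)) atTop (𝓝 (⨅ m, φ (e m))) :=
      tendsto_atTop_ciInf hanti ⟨0, by rintro y ⟨m, rfl⟩; exact hφe0 m⟩
    have hdiff : Tendsto (fun j => φ (e j) - φ (e (j+1))) atTop (𝓝 0) := by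
      have := hconv.sub (hconv.comp (tendsto_add_atTop_nat 1))
      simpa using this
    have hφgto : Tendsto (fun j => φ (g j)) atTop (𝓝 0) := by
      have h1 : Tendsto (fun j => lam⁻¹ * φ (g j)) atTop (𝓝 0) := by
        have heq : (fun j => lam⁻¹ * φ (g j)) = (fun j => φ (e j) - φ (e (j+1))) := by
          funext j; rw [hstep]
        rw [heq]; exact hdiff
      have := h1.const_mul lam
      simp only [mul_zero] at this
      have heq2 : (fun j => lam * (lam⁻¹ * φ (g j))) = fun j => φ (g j) := by
        funext j; field_simp
      rwa [heq2] at this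
    have hgnorm : Tendsto (fun j => ‖g j‖) atTop (𝓝 0) := by
      have hb1 : ∀ j, ‖g j‖ ≤ ε⁻¹ * φ (g j) := by
        intro j
        calc ‖g j‖ ≤ φ (g j) / ε := by
              rw [le_div_iff₀ hε]
              have h2 := hφ _ (hdK j)
              nlinarith
          _ = ε⁻¹ * φ (g j) := by
              rw [div_eq_inv_mul]
      have hlim : Tendsto (fun j => ε⁻¹ * φ (g j)) atTop (𝓝 0) := by
        have := hφgto.const_mul ε⁻¹
        simpa using this
      exact squeeze_zero (fun j => norm_nonneg _) hb1 hlim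
    have hgto : Tendsto g atTop (𝓝 0) := tendsto_zero_iff_norm_tendsto_zero.mpr hgnorm
    -- identify g with powers of lam⁻¹ • A
    set T : Matrix (Fin n) (Fin n) ℝ := lam⁻¹ • A with hTdef
    have hTg : ∀ j, (T ^ j).mulVec b = g j := by
      intro j
      rw [hTdef, hgdef, smul_pow, Matrix.smul_mulVec]
    have hTto : Tendsto (fun j : ℕ => (T ^ j).mulVec b) atTop (𝓝 0) := by
      simp only [hTg]; exact hgto
    have hlimT := L1 T b hTto
    -- convert back
    set Lf : ℝ := limsup (fun m : ℕ => ‖(T ^ m).mulVec b‖ ^ ((1:ℝ)/m)) atTop with hLf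
    set r' : ℝ := (max Lf 0 + 1)/2 with hr'
    have hmax1 : max Lf 0 < 1 := max_lt hlimT one_pos
    have hr'0 : 0 ≤ r' := by
      have := le_max_right Lf 0
      rw [hr']; positivity
    have hr'1 : r' < 1 := by rw [hr']; linarith
    have hLfr' : Lf < r' := by
      have := le_max_left Lf 0
      rw [hr']; linarith
    clear_value r'
    have hevT : ∀ᶠ m : ℕ in atTop, ‖(T ^ m).mulVec b‖ ^ ((1:ℝ)/m) < r' :=
      eventually_lt_of_limsup_lt hLfr' (roots_bounded T b)
    have hevA : ∀ᶠ m : ℕ in atTop, ‖(A ^ m).mulVec b‖ ^ ((1:ℝ)/m) ≤ lam * r' := by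
      filter_upwards [hevT, eventually_ge_atTop 1] with m h1 h2
      have hm0 : m ≠ 0 := by omega
      have hnorm : ‖(A ^ m).mulVec b‖ = lam ^ m * ‖(T ^ m).mulVec b‖ := by
        rw [hTg, hgdef]
        simp only [norm_smul, Real.norm_eq_abs]
        rw [abs_of_pos (by positivity), ← mul_assoc]
        rw [← mul_pow]
        field_simp
        simp
      rw [hnorm, Real.mul_rpow (by positivity) (norm_nonneg _)]
      rw [one_div, Real.pow_rpow_inv_natCast hlam.le hm0, ← one_div]
      exact mul_le_mul_of_nonneg_left h1.le hlam.le
    have hcob : IsCoboundedUnder (· ≤ ·) atTop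
        (fun m : ℕ => ‖(A ^ m).mulVec b‖ ^ ((1:ℝ)/m)) :=
      isCoboundedUnder_le_of_le atTop (x := 0) fun m => Real.rpow_nonneg (norm_nonneg _) _
    have hfin : localRho A b ≤ lam * r' := limsup_le_of_le hcob hevA
    have : lam * r' < lam := by nlinarith
    exact lt_of_le_of_lt hfin this
  refine ⟨⟨main1, fun h => ?_⟩, main2⟩
  obtain ⟨x0, ht, hx0K, hsol⟩ := main2 h
  exact ⟨x0, hx0K, hsol⟩
end

section
/- Let K be a proper cone in ℝⁿ, A an n×n real matrix with AK ⊆ K, b a nonzero vector of K, and λ > 0 with ρ_b(A) < λ. If x and x' are two solutions in K of (λI - A)x = b, then x - x' is either zero or an eigenvector of A corresponding to the eigenvalue λ lying in span K; in particular, if λ is not an eigenvalue of A then the solution in K is unique. -/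
open Filter Matrix
open scoped Topology

theorem stmt4 {n : ℕ} {K : Set (Fin n → ℝ)} (hK : IsProperCone K)
    (A : Matrix (Fin n) (Fin n) ℝ) (hA : ∀ v ∈ K, A.mulVec v ∈ K)
    (b : Fin n → ℝ) (hb : b ∈ K) (hb0 : b ≠ 0) (lam : ℝ) (hlam : 0 < lam)
    (hrho : localRho A b < lam)
    (x x' : Fin n → ℝ) (hx : x ∈ K) (hx' : x' ∈ K)
    (hsol : (lam • (1 : Matrix (Fin n) (Fin n) ℝ) - A).mulVec x = b)
    (hsol' : (lam • (1 : Matrix (Fin n) (Fin n) ℝ) - A).mulVec x' = b) :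
    (x - x' = 0 ∨ (x - x' ≠ 0 ∧ A.mulVec (x - x') = lam • (x - x'))) ∧
    ((¬ ∃ v : Fin n → ℝ, v ≠ 0 ∧ A.mulVec v = lam • v) → x = x') := by
  have h0 : (lam • (1 : Matrix (Fin n) (Fin n) ℝ) - A).mulVec (x - x') = 0 := by
    rw [Matrix.mulVec_sub, hsol, hsol', sub_self]
  have h : A.mulVec (x - x') = lam • (x - x') := by
    rw [Matrix.sub_mulVec, Matrix.smul_mulVec, Matrix.one_mulVec] at h0
    linear_combination (norm := module) -h0
  constructor
  · by_cases hd : x - x' = 0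
    · exact Or.inl hd
    · exact Or.inr ⟨hd, h⟩
  · intro hne
    by_contra hxx
    exact hne ⟨x - x', sub_ne_zero.mpr hxx, h⟩
end

section
/- Let A be a complex n×n matrix, b ∈ ℂⁿ nonzero, and λ > 0. Then ρ_b(A) < λ if and only if ⟨z, b⟩ = 0 for every generalized eigenvector z of the conjugate transpose A* corresponding to an eigenvalue of modulus ≥ λ. -/
open Filter Matrix
open scoped Topology

section basics
variable {n : ℕ}

lemma myDot_le (v w : Fin n → ℂ) : ‖v ⬝ᵥ w‖ ≤ (∑ i, ‖v i‖) * ‖w‖ := by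
  calc ‖v ⬝ᵥ w‖ ≤ ∑ i, ‖v i * w i‖ := norm_sum_le _ _
    _ ≤ ∑ i, ‖v i‖ * ‖w‖ := by
        refine Finset.sum_le_sum fun i _ => ?_
        rw [norm_mul]
        exact mul_le_mul_of_nonneg_left (norm_le_pi_norm w i) (norm_nonneg _)
    _ = (∑ i, ‖v i‖) * ‖w‖ := by rw [Finset.sum_mul]

lemma myMulVec_le (M : Matrix (Fin n) (Fin n) ℂ) (v : Fin n → ℂ) :
    ‖M *ᵥ v‖ ≤ (∑ i, ∑ j, ‖M i j‖) * ‖v‖ := by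
  have hK : 0 ≤ (∑ i, ∑ j, ‖M i j‖) :=
    Finset.sum_nonneg fun i _ => Finset.sum_nonneg fun j _ => norm_nonneg _
  rw [pi_norm_le_iff_of_nonneg (mul_nonneg hK (norm_nonneg _))]
  intro i
  calc ‖(M *ᵥ v) i‖ = ‖(fun j => M i j) ⬝ᵥ v‖ := rfl
    _ ≤ (∑ j, ‖M i j‖) * ‖v‖ := myDot_le _ _
    _ ≤ (∑ i, ∑ j, ‖M i j‖) * ‖v‖ := by
        refine mul_le_mul_of_nonneg_right ?_ (norm_nonneg _)
        exact Finset.single_le_sum (f := fun i => ∑ j, ‖M i j‖)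
          (fun i _ => Finset.sum_nonneg fun j _ => norm_nonneg _) (Finset.mem_univ i)

lemma myPow_mulVec_le (M : Matrix (Fin n) (Fin n) ℂ) (v : Fin n → ℂ) (m : ℕ) :
    ‖(M ^ m) *ᵥ v‖ ≤ (∑ i, ∑ j, ‖M i j‖) ^ m * ‖v‖ := by
  have hK : 0 ≤ (∑ i, ∑ j, ‖M i j‖) :=
    Finset.sum_nonneg fun i _ => Finset.sum_nonneg fun j _ => norm_nonneg _
  induction m with
  | zero => simp [Matrix.one_mulVec]
  | succ m ih =>
      have : (M ^ (m+1)) *ᵥ v = M *ᵥ ((M ^ m) *ᵥ v) := by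
        rw [Matrix.mulVec_mulVec, pow_succ']
      rw [this]
      calc ‖M *ᵥ ((M ^ m) *ᵥ v)‖ ≤ (∑ i, ∑ j, ‖M i j‖) * ‖(M ^ m) *ᵥ v‖ := myMulVec_le _ _
        _ ≤ (∑ i, ∑ j, ‖M i j‖) * ((∑ i, ∑ j, ‖M i j‖) ^ m * ‖v‖) :=
            mul_le_mul_of_nonneg_left ih hK
        _ = (∑ i, ∑ j, ‖M i j‖) ^ (m+1) * ‖v‖ := by ring

end basics

variable {n : ℕ}

lemma myBinom (M : Matrix (Fin n) (Fin n) ℂ) (μ : ℂ) (m : ℕ) :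
    M ^ m = ∑ j ∈ Finset.range (m+1),
      ((m.choose j : ℂ) * μ ^ (m - j)) • (M - μ • (1 : Matrix (Fin n) (Fin n) ℂ)) ^ j := by
  set N := M - μ • (1 : Matrix (Fin n) (Fin n) ℂ) with hN
  have hM : M = N + μ • 1 := by rw [hN]; abel
  have hc : Commute N (μ • (1 : Matrix (Fin n) (Fin n) ℂ)) :=
    (Commute.one_right N).smul_right μ
  rw [hM, hc.add_pow]
  refine Finset.sum_congr rfl fun j hj => ?_
  have h1 : (μ • (1 : Matrix (Fin n) (Fin n) ℂ)) ^ (m - j) = μ ^ (m - j) • 1 := by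
    rw [smul_pow, one_pow]
  have h2 : ((m.choose j : ℕ) : Matrix (Fin n) (Fin n) ℂ) = ((m.choose j : ℂ)) • 1 := by
    rw [Nat.cast_smul_eq_nsmul]; simp
  rw [h1, h2]
  rw [mul_smul_comm, mul_smul_comm, mul_one, smul_smul, mul_comm, mul_one]

lemma mySum_mulVec {ι : Type*} (s : Finset ι) (f : ι → Matrix (Fin n) (Fin n) ℂ)
    (v : Fin n → ℂ) : (∑ j ∈ s, f j) *ᵥ v = ∑ j ∈ s, (f j) *ᵥ v :=
  map_sum (Matrix.mulVec.addMonoidHomLeft v) f s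

lemma myPow_mulVec_expand (M : Matrix (Fin n) (Fin n) ℂ) (μ : ℂ) (m : ℕ) (z : Fin n → ℂ) :
    (M ^ m) *ᵥ z = ∑ j ∈ Finset.range (m+1),
      ((m.choose j : ℂ) * μ ^ (m - j)) • ((M - μ • 1) ^ j) *ᵥ z := by
  rw [myBinom M μ m, mySum_mulVec]
  refine Finset.sum_congr rfl fun j hj => ?_
  rw [Matrix.smul_mulVec]

lemma myAdjoint_dot (M : Matrix (Fin n) (Fin n) ℂ) (z x : Fin n → ℂ) :
    star (M *ᵥ z) ⬝ᵥ x = star z ⬝ᵥ (Mᴴ *ᵥ x) := by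
  rw [Matrix.star_mulVec, Matrix.dotProduct_mulVec]

variable {n : ℕ}

lemma myKey (A : Matrix (Fin n) (Fin n) ℂ) (τ μ : ℂ) (z x : Fin n → ℂ) :
    star ((Aᴴ - τ • 1) *ᵥ z) ⬝ᵥ x
      = star z ⬝ᵥ ((A - μ • 1) *ᵥ x) + (μ - (starRingEnd ℂ) τ) * (star z ⬝ᵥ x) := by
  have h1 : (Aᴴ - τ • (1 : Matrix (Fin n) (Fin n) ℂ))ᴴ
      = (A - μ • 1) + ((μ - (starRingEnd ℂ) τ) • 1) := by
    rw [Matrix.conjTranspose_sub, Matrix.conjTranspose_smul, Matrix.conjTranspose_conjTranspose,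
      Matrix.conjTranspose_one]
    rw [sub_smul]
    abel
  rw [Matrix.star_mulVec, h1, Matrix.vecMul_add, add_dotProduct,
    ← Matrix.dotProduct_mulVec, ← Matrix.dotProduct_mulVec,
    Matrix.smul_mulVec, Matrix.one_mulVec, dotProduct_smul, smul_eq_mul]

lemma myOrth (A : Matrix (Fin n) (Fin n) ℂ) (τ μ : ℂ) (hne : (starRingEnd ℂ) τ ≠ μ) :
    ∀ (s j k : ℕ), j + k ≤ s → ∀ (z x : Fin n → ℂ),
      ((Aᴴ - τ • 1) ^ j) *ᵥ z = 0 → ((A - μ • 1) ^ k) *ᵥ x = 0 →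
      star z ⬝ᵥ x = 0 := by
  intro s
  induction s with
  | zero =>
      intro j k hjk z x hz hx
      have hj : j = 0 := by omega
      subst hj
      rw [pow_zero, Matrix.one_mulVec] at hz
      rw [hz]
      simp
  | succ s ih =>
      intro j k hjk z x hz hx
      match j, k with
      | 0, k =>
          rw [pow_zero, Matrix.one_mulVec] at hz
          rw [hz]; simp
      | j+1, 0 =>
          rw [pow_zero, Matrix.one_mulVec] at hx
          rw [hx]; simp
      | j+1, k+1 =>
          have h1 : star ((Aᴴ - τ • 1) *ᵥ z) ⬝ᵥ x = 0 := by
            refine ih j (k+1) (by omega) _ _ ?_ hx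
            rw [Matrix.mulVec_mulVec, ← pow_succ]
            exact hz
          have h2 : star z ⬝ᵥ ((A - μ • 1) *ᵥ x) = 0 := by
            refine ih (j+1) k (by omega) _ _ hz ?_
            rw [Matrix.mulVec_mulVec, ← pow_succ]
            exact hx
          have := myKey A τ μ z x
          rw [h1, h2, zero_add] at this
          rcases mul_eq_zero.mp this.symm with h | h
          · exact absurd (sub_eq_zero.mp h).symm hne
          · exact h

variable {n : ℕ}

/-- vectors z with ⟨z, w⟩ = 0 : a submodule in z. -/
noncomputable def myLeftKer (w : Fin n → ℂ) : Submodule ℂ (Fin n → ℂ) where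
  carrier := {z | star z ⬝ᵥ w = 0}
  add_mem' := by
    intro a b ha hb
    simp only [Set.mem_setOf_eq] at *
    rw [star_add, add_dotProduct, ha, hb, add_zero]
  zero_mem' := by simp
  smul_mem' := by
    intro c z hz
    simp only [Set.mem_setOf_eq] at *
    rw [star_smul, smul_dotProduct, hz, smul_zero]

/-- vectors x with ⟨z, x⟩ = 0 : a submodule in x. -/
noncomputable def myRightKer (z : Fin n → ℂ) : Submodule ℂ (Fin n → ℂ) where
  carrier := {x | star z ⬝ᵥ x = 0}
  add_mem' := by
    intro a b ha hb
    simp only [Set.mem_setOf_eq] at *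
    rw [dotProduct_add, ha, hb, add_zero]
  zero_mem' := by simp
  smul_mem' := by
    intro c x hx
    simp only [Set.mem_setOf_eq] at *
    rw [dotProduct_smul, hx, smul_zero]

/-- The growth submodule. -/
noncomputable def myGrowth (A : Matrix (Fin n) (Fin n) ℂ) (lam : ℝ) (hlam : 0 < lam) :
    Submodule ℂ (Fin n → ℂ) where
  carrier := {x | ∃ r, 0 < r ∧ r < lam ∧ ∃ C, 0 ≤ C ∧
      ∀ m : ℕ, ‖(A ^ m) *ᵥ x‖ ≤ C * r ^ m}
  add_mem' := by
    rintro a b ⟨r1, hr1, hr1l, C1, hC1, h1⟩ ⟨r2, hr2, hr2l, C2, hC2, h2⟩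
    refine ⟨max r1 r2, lt_max_of_lt_left hr1, max_lt hr1l hr2l, C1 + C2,
      add_nonneg hC1 hC2, fun m => ?_⟩
    rw [Matrix.mulVec_add]
    calc ‖(A ^ m) *ᵥ a + (A ^ m) *ᵥ b‖ ≤ ‖(A ^ m) *ᵥ a‖ + ‖(A ^ m) *ᵥ b‖ := norm_add_le _ _
      _ ≤ C1 * r1 ^ m + C2 * r2 ^ m := add_le_add (h1 m) (h2 m)
      _ ≤ C1 * (max r1 r2) ^ m + C2 * (max r1 r2) ^ m := by
          gcongr
          exacts [le_max_left _ _, le_max_right _ _]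
      _ = (C1 + C2) * (max r1 r2) ^ m := by ring
  zero_mem' := ⟨lam / 2, by linarith, by linarith, 0, le_refl _, fun m => by simp⟩
  smul_mem' := by
    rintro c x ⟨r, hr, hrl, C, hC, h⟩
    refine ⟨r, hr, hrl, ‖c‖ * C, mul_nonneg (norm_nonneg _) hC, fun m => ?_⟩
    rw [Matrix.mulVec_smul, norm_smul, mul_assoc]
    exact mul_le_mul_of_nonneg_left (h m) (norm_nonneg _)

/-- the endomorphism of a matrix -/
def myEnd (M : Matrix (Fin n) (Fin n) ℂ) : Module.End ℂ (Fin n → ℂ) :=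
  Matrix.toLinAlgEquiv' M

/-- Bridge: membership in the max generalized eigenspace of mulVec. -/
lemma myBridge (M : Matrix (Fin n) (Fin n) ℂ) (μ : ℂ) (x : Fin n → ℂ) :
    x ∈ (myEnd M).maxGenEigenspace μ ↔
      ∃ k : ℕ, ((M - μ • 1) ^ k) *ᵥ x = 0 := by
  rw [Module.End.mem_maxGenEigenspace]
  have key : ∀ k : ℕ, ((myEnd M - μ • (1 : Module.End ℂ (Fin n → ℂ))) ^ k) x
      = ((M - μ • 1) ^ k) *ᵥ x := by
    intro k
    have h1 : myEnd M - μ • (1 : Module.End ℂ (Fin n → ℂ))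
        = myEnd (M - μ • 1) := by
      show _ = (Matrix.toLinAlgEquiv' (M - μ • 1) : Module.End ℂ (Fin n → ℂ))
      rw [map_sub, _root_.map_smul, _root_.map_one]
      rfl
    have h2 : (myEnd (M - μ • 1)) ^ k = myEnd ((M - μ • 1) ^ k) := by
      show _ = (Matrix.toLinAlgEquiv' ((M - μ • 1) ^ k) : Module.End ℂ (Fin n → ℂ))
      rw [map_pow]
      rfl
    rw [h1, h2]
    rfl
  simp_rw [key]

variable {n : ℕ}

lemma myRpow_pow (x : ℝ) (hx : 0 ≤ x) (m : ℕ) (hm : 1 ≤ m) :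
    (x ^ m) ^ ((1:ℝ)/(m:ℝ)) = x := by
  have hm' : (m : ℝ) ≠ 0 := Nat.cast_ne_zero.mpr (by omega)
  rw [← Real.rpow_natCast x m, ← Real.rpow_mul hx, mul_one_div_cancel hm', Real.rpow_one]

lemma myBdd (A : Matrix (Fin n) (Fin n) ℂ) (b : Fin n → ℂ) :
    IsBoundedUnder (· ≤ ·) atTop (fun m : ℕ => ‖(A ^ m) *ᵥ b‖ ^ ((1:ℝ)/(m:ℝ))) := by
  set K := (∑ i, ∑ j, ‖A i j‖) with hKdef
  have hK : 0 ≤ K := Finset.sum_nonneg fun i _ => Finset.sum_nonneg fun j _ => norm_nonneg _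
  set c := (K + 1) * max ‖b‖ 1 with hcdef
  have hc1 : 1 ≤ c := by
    rw [hcdef]
    nlinarith [le_max_right ‖b‖ (1:ℝ), norm_nonneg b]
  refine ⟨c, eventually_map.mpr (Eventually.of_forall fun m => ?_)⟩
  rcases Nat.eq_zero_or_pos m with hm | hm
  · subst hm
    simp only [Nat.cast_zero, div_zero, Real.rpow_zero]
    exact hc1
  · have h1 : ‖(A ^ m) *ᵥ b‖ ≤ c ^ m := by
      calc ‖(A ^ m) *ᵥ b‖ ≤ K ^ m * ‖b‖ := myPow_mulVec_le A b m
        _ ≤ (K+1) ^ m * (max ‖b‖ 1) ^ m := by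
            refine mul_le_mul (pow_le_pow_left₀ hK (by linarith) m)
              (le_trans (le_max_left _ _) (le_self_pow₀ (le_max_right _ _) (by omega)))
              (norm_nonneg _) (by positivity)
        _ = c ^ m := by rw [hcdef, mul_pow]
    calc ‖(A ^ m) *ᵥ b‖ ^ ((1:ℝ)/(m:ℝ)) ≤ (c ^ m) ^ ((1:ℝ)/(m:ℝ)) :=
          Real.rpow_le_rpow (norm_nonneg _) h1 (by positivity)
      _ = c := myRpow_pow c (by linarith) m hm

lemma myLimsupLe (A : Matrix (Fin n) (Fin n) ℂ) (b : Fin n → ℂ) (r C : ℝ)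
    (hr : 0 < r) (hC : 0 ≤ C) (h : ∀ m : ℕ, ‖(A ^ m) *ᵥ b‖ ≤ C * r ^ m) :
    limsup (fun m : ℕ => ‖(A ^ m) *ᵥ b‖ ^ ((1:ℝ)/(m:ℝ))) atTop ≤ r := by
  set g := fun m : ℕ => (C + 1) ^ ((1:ℝ)/(m:ℝ)) * r with hg
  have hgt : Tendsto g atTop (𝓝 r) := by
    have h1 : Tendsto (fun m : ℕ => (C + 1) ^ ((1:ℝ)/(m:ℝ))) atTop (𝓝 1) := by
      have hc : ContinuousAt (fun x : ℝ => (C + 1) ^ x) 0 :=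
        Real.continuousAt_const_rpow (by linarith)
      have := hc.tendsto.comp tendsto_one_div_atTop_nhds_zero_nat
      simpa [Real.rpow_zero, Function.comp_def] using this
    have := h1.mul_const r
    rw [one_mul] at this
    exact this
  have hfg : ∀ᶠ m : ℕ in atTop, ‖(A ^ m) *ᵥ b‖ ^ ((1:ℝ)/(m:ℝ)) ≤ g m := by
    filter_upwards [eventually_ge_atTop 1] with m hm
    calc ‖(A ^ m) *ᵥ b‖ ^ ((1:ℝ)/(m:ℝ)) ≤ ((C + 1) * r ^ m) ^ ((1:ℝ)/(m:ℝ)) := by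
          refine Real.rpow_le_rpow (norm_nonneg _) ?_ (by positivity)
          calc ‖(A ^ m) *ᵥ b‖ ≤ C * r ^ m := h m
            _ ≤ (C + 1) * r ^ m := by nlinarith [pow_pos hr m]
      _ = (C + 1) ^ ((1:ℝ)/(m:ℝ)) * (r ^ m) ^ ((1:ℝ)/(m:ℝ)) :=
          Real.mul_rpow (by linarith) (by positivity)
      _ = g m := by rw [myRpow_pow r hr.le m hm]
  calc limsup (fun m : ℕ => ‖(A ^ m) *ᵥ b‖ ^ ((1:ℝ)/(m:ℝ))) atTop ≤ limsup g atTop := by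
        refine limsup_le_limsup hfg ?_ ?_
        · refine isCoboundedUnder_le_of_le atTop (x := 0) fun m => by positivity
        · exact hgt.isBoundedUnder_le
    _ = r := hgt.limsup_eq

lemma myGeomBdd (q : ℝ) (hq0 : 0 ≤ q) (hq1 : q < 1) (j : ℕ) :
    ∃ C : ℝ, 0 ≤ C ∧ ∀ m : ℕ, (m:ℝ) ^ j * q ^ m ≤ C := by
  have hs : Summable fun m : ℕ => ‖((m:ℝ) ^ j * q ^ m)‖ :=
    summable_norm_pow_mul_geometric_of_norm_lt_one j
      (by rwa [Real.norm_eq_abs, abs_of_nonneg hq0])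
  have ht : Tendsto (fun m : ℕ => (m:ℝ) ^ j * q ^ m) atTop (𝓝 0) :=
    (hs.of_norm).tendsto_atTop_zero
  obtain ⟨C, hC⟩ := ht.bddAbove_range
  refine ⟨max C 0, le_max_right _ _, fun m => ?_⟩
  exact le_trans (hC (Set.mem_range_self m)) (le_max_left _ _)

lemma mySumCut (u : ℕ → ℝ) (k : ℕ) (h0 : ∀ j, k ≤ j → u j = 0) (hnn : ∀ j, 0 ≤ u j)
    (M : ℕ) : ∑ j ∈ Finset.range M, u j ≤ ∑ j ∈ Finset.range k, u j := by
  rcases le_total M k with h | h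
  · exact Finset.sum_le_sum_of_subset_of_nonneg (Finset.range_subset_range.2 h)
      (fun j _ _ => hnn j)
  · refine le_of_eq (Finset.sum_subset (Finset.range_subset_range.2 h) ?_).symm
    intro x hx hnx
    exact h0 x (by simpa using hnx)

lemma mySum_dotProduct {ι : Type*} (s : Finset ι) (f : ι → (Fin n → ℂ)) (w : Fin n → ℂ) :
    (∑ j ∈ s, f j) ⬝ᵥ w = ∑ j ∈ s, (f j) ⬝ᵥ w := by
  classical
  induction s using Finset.induction with
  | empty => simp
  | insert a s hnotmem ih =>
      rw [Finset.sum_insert hnotmem, Finset.sum_insert hnotmem, add_dotProduct, ih]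

lemma myRpow_pow_inv (x : ℝ) (hx : 0 ≤ x) (m : ℕ) (hm : 1 ≤ m) :
    (x ^ ((1:ℝ)/(m:ℝ))) ^ m = x := by
  have hm' : (m : ℝ) ≠ 0 := Nat.cast_ne_zero.mpr (by omega)
  rw [← Real.rpow_natCast (x ^ ((1:ℝ)/(m:ℝ))) m, ← Real.rpow_mul hx, one_div_mul_cancel hm',
    Real.rpow_one]

lemma myDir1 (A : Matrix (Fin n) (Fin n) ℂ) (b : Fin n → ℂ) (lam : ℝ) (hlam : 0 < lam)
    (h : limsup (fun m : ℕ => ‖(A ^ m) *ᵥ b‖ ^ ((1:ℝ)/(m:ℝ))) atTop < lam)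
    (μ : ℂ) (hμ : lam ≤ ‖μ‖) :
    ∀ (k : ℕ) (z : Fin n → ℂ), ((Aᴴ - μ • 1) ^ k) *ᵥ z = 0 → star z ⬝ᵥ b = 0 := by
  -- find r with limsup < r < lam, 0 < r
  obtain ⟨r0, hr0a, hr0b⟩ := exists_between h
  set r := max r0 (lam/2) with hrdef
  have hrlim : limsup (fun m : ℕ => ‖(A ^ m) *ᵥ b‖ ^ ((1:ℝ)/(m:ℝ))) atTop < r :=
    lt_of_lt_of_le hr0a (le_max_left _ _)
  have hrlam : r < lam := max_lt hr0b (by linarith)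
  have hrpos : 0 < r := lt_of_lt_of_le (by linarith) (le_max_right _ _)
  have hev : ∀ᶠ m : ℕ in atTop, ‖(A ^ m) *ᵥ b‖ ^ ((1:ℝ)/(m:ℝ)) < r :=
    eventually_lt_of_limsup_lt hrlim (myBdd A b)
  -- eventual norm bound
  have hev2 : ∀ᶠ m : ℕ in atTop, ‖(A ^ m) *ᵥ b‖ ≤ r ^ m := by
    filter_upwards [hev, eventually_ge_atTop 1] with m h1 h2
    have hx : (0:ℝ) ≤ ‖(A ^ m) *ᵥ b‖ := norm_nonneg _
    have := pow_le_pow_left₀ (Real.rpow_nonneg hx _) h1.le m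
    rwa [myRpow_pow_inv _ hx m h2] at this
  intro k
  induction k with
  | zero =>
      intro z hz
      rw [pow_zero, Matrix.one_mulVec] at hz
      simp [hz]
  | succ k ih =>
      intro z hz
      have hcj : ∀ j : ℕ, 1 ≤ j → star (((Aᴴ - μ • 1) ^ j) *ᵥ z) ⬝ᵥ b = 0 := by
        intro j hj
        apply ih
        rw [Matrix.mulVec_mulVec, ← pow_add]
        have hkj : k + j = (k + j - (k+1)) + (k+1) := by omega
        rw [hkj, pow_add, ← Matrix.mulVec_mulVec, hz, Matrix.mulVec_zero]
      have hm : ∀ m : ℕ, star z ⬝ᵥ ((A ^ m) *ᵥ b)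
          = (starRingEnd ℂ) (μ ^ m) * (star z ⬝ᵥ b) := by
        intro m
        have h1 : star z ⬝ᵥ ((A ^ m) *ᵥ b) = star (((Aᴴ) ^ m) *ᵥ z) ⬝ᵥ b := by
          rw [myAdjoint_dot, ← Matrix.conjTranspose_pow, Matrix.conjTranspose_conjTranspose]
        rw [h1, myPow_mulVec_expand (Aᴴ) μ m z, star_sum, mySum_dotProduct]
        rw [Finset.sum_eq_single_of_mem 0 (Finset.mem_range.mpr (by omega))]
        · simp [star_smul, smul_dotProduct, smul_eq_mul, map_pow]
        · intro j hjr hj0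
          rw [star_smul, smul_dotProduct, hcj j (by omega), smul_zero]
      -- conclude
      by_contra hc0
      set c0 := star z ⬝ᵥ b with hc0def
      have habs : ∀ᶠ m : ℕ in atTop,
          ‖c0‖ * ‖μ‖ ^ m ≤ (∑ i, ‖star z i‖) * r ^ m := by
        filter_upwards [hev2] with m hm2
        have h2 : ‖star z ⬝ᵥ ((A ^ m) *ᵥ b)‖ ≤ (∑ i, ‖star z i‖) * r ^ m := by
          calc ‖star z ⬝ᵥ ((A ^ m) *ᵥ b)‖ ≤ (∑ i, ‖star z i‖) * ‖(A ^ m) *ᵥ b‖ :=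
                myDot_le _ _
            _ ≤ (∑ i, ‖star z i‖) * r ^ m := by
                refine mul_le_mul_of_nonneg_left hm2 ?_
                exact Finset.sum_nonneg fun i _ => norm_nonneg _
        rw [hm m, norm_mul] at h2
        rw [Complex.norm_conj, norm_pow] at h2
        linarith [h2, mul_comm (‖c0‖) (‖μ‖ ^ m)]
      -- contradiction with growth of (|μ|/r)^m
      set D := (∑ i, ‖star z i‖) with hD
      have hc0pos : 0 < ‖c0‖ := by
        simpa using (norm_pos_iff.mpr hc0)
      have hgt : Tendsto (fun m : ℕ => (‖μ‖ / r) ^ m) atTop atTop := by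
        apply tendsto_pow_atTop_atTop_of_one_lt
        rw [lt_div_iff₀ hrpos, one_mul]
        exact lt_of_lt_of_le hrlam hμ
      have hbig : ∀ᶠ m : ℕ in atTop, D / ‖c0‖ < (‖μ‖ / r) ^ m :=
        hgt.eventually_gt_atTop _
      obtain ⟨m, h1, h2⟩ := (habs.and hbig).exists
      have hrm : (0:ℝ) < r ^ m := pow_pos hrpos m
      rw [div_pow, lt_div_iff₀ hrm, div_mul_eq_mul_div, div_lt_iff₀ hc0pos] at h2
      nlinarith

lemma myStarDotSelf (v : Fin n → ℂ) (h : star v ⬝ᵥ v = 0) : v = 0 := by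
  have hsum : ∑ i, Complex.normSq (v i) = 0 := by
    have h2 : ∑ i, ((Complex.normSq (v i) : ℂ)) = 0 := by
      rw [← h]
      refine Finset.sum_congr rfl fun i _ => ?_
      exact Complex.normSq_eq_conj_mul_self
    exact_mod_cast h2
  have hz := (Finset.sum_eq_zero_iff_of_nonneg
    (fun i _ => Complex.normSq_nonneg (v i))).mp hsum
  funext i
  exact Complex.normSq_eq_zero.mp (hz i (Finset.mem_univ i))

lemma myOrthSub (A : Matrix (Fin n) (Fin n) ℂ) (τ μ : ℂ) (hne : (starRingEnd ℂ) τ ≠ μ)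
    (z : Fin n → ℂ) (hz : z ∈ (myEnd Aᴴ).maxGenEigenspace τ) :
    (myEnd A).maxGenEigenspace μ ≤ myRightKer z := by
  intro x hx
  obtain ⟨j, hj⟩ := (myBridge Aᴴ τ z).mp hz
  obtain ⟨k, hk⟩ := (myBridge A μ x).mp hx
  exact myOrth A τ μ hne (j + k) j k le_rfl z x hj hk

lemma myEigSubGrowth (A : Matrix (Fin n) (Fin n) ℂ) (lam : ℝ) (hlam : 0 < lam)
    (μ : ℂ) (hμ : ‖μ‖ < lam) :
    (myEnd A).maxGenEigenspace μ ≤ myGrowth A lam hlam := by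
  intro x hx
  obtain ⟨k, hk⟩ := (myBridge A μ x).mp hx
  set N := A - μ • (1 : Matrix (Fin n) (Fin n) ℂ) with hN
  have habs : 0 ≤ ‖μ‖ := norm_nonneg _
  set s := (‖μ‖ + lam)/2 with hs
  set r := (s + lam)/2 with hr
  have hs0 : 0 < s := by rw [hs]; linarith
  have hμs : ‖μ‖ < s := by rw [hs]; linarith
  have hsr : s < r := by rw [hr]; linarith
  have hrlam : r < lam := by rw [hr]; linarith
  have hr0 : 0 < r := lt_trans hs0 hsr
  have hq0 : 0 ≤ s / r := by positivity
  have hq1 : s / r < 1 := (div_lt_one hr0).mpr hsr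
  clear hs hr
  clear_value s r
  choose Cf hCf using fun j => myGeomBdd (s/r) hq0 hq1 j
  set u : ℕ → ℝ := fun j => Cf j * (s⁻¹) ^ j * ‖(N ^ j) *ᵥ x‖ with hu
  have hu0 : ∀ j, 0 ≤ u j := fun j =>
    mul_nonneg (mul_nonneg (hCf j).1 (by positivity)) (norm_nonneg _)
  have huk : ∀ j, k ≤ j → u j = 0 := by
    intro j hj
    have : (N ^ j) *ᵥ x = 0 := by
      have hjk : j = (j - k) + k := by omega
      rw [hjk, pow_add, ← Matrix.mulVec_mulVec, hk, Matrix.mulVec_zero]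
    simp only [hu, this]
    simp
  refine ⟨r, hr0, hrlam, ∑ j ∈ Finset.range k, u j,
    Finset.sum_nonneg fun j _ => hu0 j, fun m => ?_⟩
  calc ‖(A ^ m) *ᵥ x‖
      = ‖∑ j ∈ Finset.range (m+1), ((m.choose j : ℂ) * μ ^ (m - j)) • ((N ^ j) *ᵥ x)‖ := by
        rw [myPow_mulVec_expand A μ m x]
    _ ≤ ∑ j ∈ Finset.range (m+1), ‖((m.choose j : ℂ) * μ ^ (m - j)) • ((N ^ j) *ᵥ x)‖ :=
        norm_sum_le _ _
    _ ≤ ∑ j ∈ Finset.range (m+1), u j * r ^ m := by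
        refine Finset.sum_le_sum fun j hj => ?_
        have hjm : j ≤ m := by
          have := Finset.mem_range.mp hj; omega
        rw [norm_smul, norm_mul, norm_pow, Complex.norm_natCast]
        have hstep : (m.choose j : ℝ) * ‖μ‖ ^ (m - j) ≤ Cf j * s⁻¹ ^ j * r ^ m := by
          have h1 : (m.choose j : ℝ) * ‖μ‖ ^ (m - j) ≤ (m:ℝ) ^ j * s ^ (m - j) := by
            refine mul_le_mul ?_ (pow_le_pow_left₀ habs hμs.le _) (by positivity) (by positivity)
            calc (m.choose j : ℝ) ≤ (m:ℝ) ^ j / (j.factorial : ℝ) := Nat.choose_le_pow_div j m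
              _ ≤ (m:ℝ) ^ j := div_le_self (by positivity)
                  (by exact_mod_cast Nat.one_le_iff_ne_zero.mpr j.factorial_ne_zero)
          have h2 : (m:ℝ) ^ j * s ^ (m - j) = ((m:ℝ) ^ j * (s/r) ^ m) * (s⁻¹ ^ j * r ^ m) := by
            have hs' : s ≠ 0 := ne_of_gt hs0
            have hr' : r ≠ 0 := ne_of_gt hr0
            rw [pow_sub₀ s hs' hjm, div_pow, inv_pow]
            field_simp
          have h3 : ((m:ℝ) ^ j * (s/r) ^ m) * (s⁻¹ ^ j * r ^ m) ≤ Cf j * (s⁻¹ ^ j * r ^ m) :=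
            mul_le_mul_of_nonneg_right ((hCf j).2 m) (by positivity)
          calc (m.choose j : ℝ) * ‖μ‖ ^ (m - j) ≤ (m:ℝ) ^ j * s ^ (m - j) := h1
            _ = ((m:ℝ) ^ j * (s/r) ^ m) * (s⁻¹ ^ j * r ^ m) := h2
            _ ≤ Cf j * (s⁻¹ ^ j * r ^ m) := h3
            _ = Cf j * s⁻¹ ^ j * r ^ m := by ring
        calc (m.choose j : ℝ) * ‖μ‖ ^ (m - j) * ‖(N ^ j) *ᵥ x‖
            ≤ (Cf j * s⁻¹ ^ j * r ^ m) * ‖(N ^ j) *ᵥ x‖ :=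
              mul_le_mul_of_nonneg_right hstep (norm_nonneg _)
          _ = u j * r ^ m := by simp only [hu]; ring
    _ = (∑ j ∈ Finset.range (m+1), u j) * r ^ m := by rw [Finset.sum_mul]
    _ ≤ (∑ j ∈ Finset.range k, u j) * r ^ m :=
        mul_le_mul_of_nonneg_right (mySumCut u k huk hu0 (m+1)) (by positivity)

lemma myDir2 (A : Matrix (Fin n) (Fin n) ℂ) (b : Fin n → ℂ) (lam : ℝ) (hlam : 0 < lam)
    (hP : ∀ (μ : ℂ) (z : Fin n → ℂ), z ≠ 0 →
        (∃ k : ℕ, 1 ≤ k ∧ ((Aᴴ - μ • (1 : Matrix (Fin n) (Fin n) ℂ)) ^ k) *ᵥ z = 0) →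
        lam ≤ ‖μ‖ → star z ⬝ᵥ b = 0) :
    limsup (fun m : ℕ => ‖(A ^ m) *ᵥ b‖ ^ ((1:ℝ)/(m:ℝ))) atTop < lam := by
  have htopA : ⨆ μ : ℂ, (myEnd A).maxGenEigenspace μ = ⊤ :=
    Module.End.iSup_maxGenEigenspace_eq_top _
  have htopB : ⨆ τ : ℂ, (myEnd Aᴴ).maxGenEigenspace τ = ⊤ :=
    Module.End.iSup_maxGenEigenspace_eq_top _
  set U := ⨆ μ ∈ {μ : ℂ | ‖μ‖ < lam}, (myEnd A).maxGenEigenspace μ with hU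
  set W := ⨆ μ ∈ {μ : ℂ | lam ≤ ‖μ‖}, (myEnd A).maxGenEigenspace μ with hW
  have hbUW : b ∈ U ⊔ W := by
    have hle : (⊤ : Submodule ℂ (Fin n → ℂ)) ≤ U ⊔ W := by
      rw [← htopA]
      refine iSup_le fun μ => ?_
      rcases lt_or_ge (‖μ‖) lam with h | h
      · exact le_sup_of_le_left (le_biSup _ h)
      · exact le_sup_of_le_right (le_biSup _ h)
    exact hle Submodule.mem_top
  obtain ⟨u, hu, w, hw, huw⟩ := Submodule.mem_sup.mp hbUW
  have hw0 : w = 0 := by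
    have hall : (⨆ τ : ℂ, (myEnd Aᴴ).maxGenEigenspace τ) ≤ myLeftKer w := by
      refine iSup_le fun τ => ?_
      intro z hz
      show star z ⬝ᵥ w = 0
      rcases lt_or_ge (‖τ‖) lam with hτ | hτ
      · have hWz : W ≤ myRightKer z := by
          refine iSup₂_le fun μ hμ => myOrthSub A τ μ ?_ z hz
          have hμ' : lam ≤ ‖μ‖ := hμ
          intro heq
          rw [← heq, Complex.norm_conj] at hμ'
          linarith
        exact hWz hw
      · have hzb : star z ⬝ᵥ b = 0 := by
          by_cases hz0 : z = 0
          · simp [hz0]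
          · obtain ⟨k, hk⟩ := (myBridge Aᴴ τ z).mp hz
            have hk1 : 1 ≤ k := by
              by_contra hcon
              have hk0 : k = 0 := by omega
              rw [hk0, pow_zero, Matrix.one_mulVec] at hk
              exact hz0 hk
            exact hP τ z hz0 ⟨k, hk1, hk⟩ hτ
        have hzu : star z ⬝ᵥ u = 0 := by
          have hUz : U ≤ myRightKer z := by
            refine iSup₂_le fun μ hμ => myOrthSub A τ μ ?_ z hz
            have hμ' : ‖μ‖ < lam := hμ
            intro heq
            rw [← heq, Complex.norm_conj] at hμ'
            linarith
          exact hUz hu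
        have hsum : star z ⬝ᵥ b = star z ⬝ᵥ u + star z ⬝ᵥ w := by
          rw [← dotProduct_add, huw]
        rw [hzb, hzu, zero_add] at hsum
        exact hsum.symm
    have hwtop : w ∈ (⨆ τ : ℂ, (myEnd Aᴴ).maxGenEigenspace τ) := by
      rw [htopB]; exact Submodule.mem_top
    exact myStarDotSelf w (hall hwtop)
  have hbU : b ∈ U := by
    rw [← huw, hw0, add_zero]; exact hu
  have hbG : b ∈ myGrowth A lam hlam := by
    have hle : U ≤ myGrowth A lam hlam :=
      iSup₂_le fun μ hμ => myEigSubGrowth A lam hlam μ hμ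
    exact hle hbU
  obtain ⟨r, hr0, hrl, C, hC0, hC⟩ := hbG
  exact lt_of_le_of_lt (myLimsupLe A b r C hr0 hC0 hC) hrl


/-- The local spectral radius of a complex matrix `A` at `b`. -/
noncomputable def localRhoC {n : ℕ} (A : Matrix (Fin n) (Fin n) ℂ) (b : Fin n → ℂ) : ℝ :=
  limsup (fun m : ℕ => ‖(A ^ m).mulVec b‖ ^ ((1 : ℝ) / m)) atTop

theorem stmt5 {n : ℕ} (A : Matrix (Fin n) (Fin n) ℂ) (b : Fin n → ℂ) (hb : b ≠ 0)
    (lam : ℝ) (hlam : 0 < lam) :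
    localRhoC A b < lam ↔
      ∀ (μ : ℂ) (z : Fin n → ℂ), z ≠ 0 →
        (∃ k : ℕ, 1 ≤ k ∧
          ((A.conjTranspose - μ • (1 : Matrix (Fin n) (Fin n) ℂ)) ^ k).mulVec z = 0) →
        lam ≤ ‖μ‖ → star z ⬝ᵥ b = 0 := by
  unfold localRhoC
  constructor
  · intro h μ z _ hk hμ
    obtain ⟨k, _, hkz⟩ := hk
    exact myDir1 A b lam hlam h μ hμ k z hkz
  · intro hP
    exact myDir2 A b lam hlam hP
end

section
/- Let P be an n×n nonnegative matrix, b a nonnegative vector in ℝⁿ, and λ > 0. Then the equation (λI - P)x = b has a nonnegative solution x if and only if ρ(P_{αα}) < λ for every class α of P having access to the support of b. -/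
open Filter Matrix
open scoped Topology Classical

attribute [local instance] Matrix.linftyOpNormedAddCommGroup

/-- The spectral radius of a real matrix, via Gelfand's formula. -/
noncomputable def rho {n : ℕ} (A : Matrix (Fin n) (Fin n) ℝ) : ℝ :=
  limsup (fun m : ℕ => ‖A ^ m‖ ^ ((1 : ℝ) / m)) atTop

/-- `i` has access to `j` in the directed graph of `P` (edges where `P a b > 0`). -/
def Access {n : ℕ} (P : Matrix (Fin n) (Fin n) ℝ) (i j : Fin n) : Prop :=
  Relation.ReflTransGen (fun a b => 0 < P a b) i j

/-- The matrix obtained from `P` by zeroing all entries outside `α × α`, where `α` is the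
class (strongly connected component) of the vertex `i`; its spectral radius is `ρ(P_{αα})`. -/
noncomputable def classMatrix {n : ℕ} (P : Matrix (Fin n) (Fin n) ℝ) (i : Fin n) :
    Matrix (Fin n) (Fin n) ℝ :=
  fun a b =>
    if (Access P i a ∧ Access P a i) ∧ (Access P i b ∧ Access P b i) then P a b else 0


section Basic
variable {n : ℕ}

lemma pow_entry_nonneg {A : Matrix (Fin n) (Fin n) ℝ} (hA : ∀ i j, 0 ≤ A i j) :
    ∀ m, ∀ i j, 0 ≤ (A ^ m) i j := by
  intro m
  induction m with
  | zero => intro i j; simp [Matrix.one_apply]; positivity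
  | succ m ih =>
    intro i j
    rw [pow_succ, Matrix.mul_apply]
    exact Finset.sum_nonneg fun k _ => mul_nonneg (ih i k) (hA k j)

lemma mulVec_nonneg {A : Matrix (Fin n) (Fin n) ℝ} (hA : ∀ i j, 0 ≤ A i j)
    {v : Fin n → ℝ} (hv : ∀ i, 0 ≤ v i) : ∀ i, 0 ≤ A.mulVec v i := by
  intro i
  rw [Matrix.mulVec, dotProduct]
  exact Finset.sum_nonneg fun j _ => mul_nonneg (hA i j) (hv j)

lemma mulVec_mono {A : Matrix (Fin n) (Fin n) ℝ} (hA : ∀ i j, 0 ≤ A i j)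
    {u v : Fin n → ℝ} (huv : ∀ i, u i ≤ v i) : ∀ i, A.mulVec u i ≤ A.mulVec v i := by
  intro i
  rw [Matrix.mulVec, dotProduct, Matrix.mulVec, dotProduct]
  exact Finset.sum_le_sum fun j _ => mul_le_mul_of_nonneg_left (huv j) (hA i j)

lemma row_sum_le_norm (A : Matrix (Fin n) (Fin n) ℝ) (i : Fin n) :
    ∑ j, A i j ≤ ‖A‖ := by
  rw [Matrix.linfty_opNorm_def]
  have h1 : ∑ j, A i j ≤ ∑ j, ‖A i j‖ := Finset.sum_le_sum fun j _ => le_abs_self _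
  refine h1.trans ?_
  have : ∑ j, ‖A i j‖ = ((∑ j, ‖A i j‖₊ : NNReal) : ℝ) := by
    push_cast; rfl
  rw [this]
  exact NNReal.coe_le_coe.2 (Finset.le_sup (f := fun i => ∑ j, ‖A i j‖₊) (Finset.mem_univ i))

lemma norm_le_of_row_sums {A : Matrix (Fin n) (Fin n) ℝ} {c : ℝ} (hc : 0 ≤ c)
    (h : ∀ i, ∑ j, ‖A i j‖ ≤ c) : ‖A‖ ≤ c := by
  rw [Matrix.linfty_opNorm_def]
  have : (Finset.univ.sup fun i => ∑ j : Fin n, ‖A i j‖₊) ≤ c.toNNReal := by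
    refine Finset.sup_le fun i _ => ?_
    rw [← NNReal.coe_le_coe]
    have h2 : ((∑ j, ‖A i j‖₊ : NNReal) : ℝ) = ∑ j, ‖A i j‖ := by push_cast; rfl
    rw [h2, Real.coe_toNNReal _ hc]
    exact h i
  calc ((Finset.univ.sup fun i => ∑ j : Fin n, ‖A i j‖₊ : NNReal) : ℝ)
      ≤ (c.toNNReal : ℝ) := NNReal.coe_le_coe.2 this
    _ = c := Real.coe_toNNReal _ hc

end Basic

section Gelfand
variable {n : ℕ}

lemma mnorm_pow_le (A : Matrix (Fin n) (Fin n) ℝ) : ∀ m, 1 ≤ m → ‖A ^ m‖ ≤ ‖A‖ ^ m := by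
  intro m
  induction m with
  | zero => intro h; exact absurd h (by norm_num)
  | succ m ih =>
    intro _
    rcases Nat.eq_or_lt_of_le (Nat.one_le_iff_ne_zero.mpr (by omega) : 1 ≤ m + 1) with h | h
    · simp [← h]
    · have hm : 1 ≤ m := by omega
      calc ‖A ^ (m+1)‖ = ‖A ^ m * A‖ := by rw [pow_succ]
        _ ≤ ‖A ^ m‖ * ‖A‖ := Matrix.linfty_opNorm_mul _ _
        _ ≤ ‖A‖ ^ m * ‖A‖ := by
            exact mul_le_mul_of_nonneg_right (ih hm) (norm_nonneg _)
        _ = ‖A‖ ^ (m+1) := by ring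

lemma rho_le_of_norm_pow_le {A : Matrix (Fin n) (Fin n) ℝ} {K d : ℝ}
    (hK : 1 ≤ K) (hd : 0 < d) (h : ∀ m, 1 ≤ m → ‖A ^ m‖ ≤ K * d ^ m) :
    rho A ≤ d := by
  set u : ℕ → ℝ := fun m => ‖A ^ m‖ ^ ((1 : ℝ) / m) with hu
  set v : ℕ → ℝ := fun m => K ^ ((1 : ℝ) / m) * d with hv
  have hKpos : (0:ℝ) < K := lt_of_lt_of_le one_pos hK
  have huv : ∀ᶠ m in atTop, u m ≤ v m := by
    filter_upwards [eventually_ge_atTop 1] with m hm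
    have hmR : (0:ℝ) < (m:ℝ) := by exact_mod_cast hm
    have h1 : ‖A ^ m‖ ≤ K * d ^ m := h m hm
    have h2 : (0:ℝ) ≤ ‖A ^ m‖ := norm_nonneg _
    have h3 : u m ≤ (K * d ^ m) ^ ((1:ℝ)/m) :=
      Real.rpow_le_rpow h2 h1 (by positivity)
    have h4 : (K * d ^ m : ℝ) ^ ((1:ℝ)/m) = K ^ ((1:ℝ)/m) * d := by
      rw [Real.mul_rpow (le_of_lt hKpos) (by positivity)]
      congr 1
      rw [← Real.rpow_natCast d m, ← Real.rpow_mul (le_of_lt hd)]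
      rw [mul_one_div, div_self (ne_of_gt hmR), Real.rpow_one]
    rw [h4] at h3
    exact h3
  have hvlim : Tendsto v atTop (nhds d) := by
    have h0 : Tendsto (fun m : ℕ => (1:ℝ) / m) atTop (nhds 0) :=
      tendsto_one_div_atTop_nhds_zero_nat
    have h1 : Tendsto (fun m : ℕ => K ^ ((1:ℝ)/m)) atTop (nhds (K ^ (0:ℝ))) :=
      Filter.Tendsto.rpow tendsto_const_nhds h0 (Or.inl (ne_of_gt hKpos))
    rw [Real.rpow_zero] at h1
    have h2 := h1.mul_const d
    rw [one_mul] at h2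
    exact h2
  have hub : IsBoundedUnder (· ≤ ·) atTop v := hvlim.isBoundedUnder_le
  have hcb : IsCoboundedUnder (· ≤ ·) atTop u := by
    refine isCoboundedUnder_le_of_eventually_le atTop (x := 0) ?_
    filter_upwards with m
    exact Real.rpow_nonneg (norm_nonneg _) _
  calc rho A = limsup u atTop := rfl
    _ ≤ limsup v atTop := limsup_le_limsup huv hcb hub
    _ = d := hvlim.limsup_eq

lemma exists_norm_pow_le {A : Matrix (Fin n) (Fin n) ℝ} {mu : ℝ}
    (hmu : 0 < mu) (h : rho A < mu) : ∃ K : ℝ, 1 ≤ K ∧ ∀ m : ℕ, ‖A ^ m‖ ≤ K * mu ^ m := by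
  set u : ℕ → ℝ := fun m => ‖A ^ m‖ ^ ((1 : ℝ) / m) with hu
  have hbdd : IsBoundedUnder (· ≤ ·) atTop u := by
    refine isBoundedUnder_of ⟨max 1 ‖A‖, fun m => ?_⟩
    rcases Nat.eq_zero_or_pos m with rfl | hm
    · show ‖A ^ 0‖ ^ ((1:ℝ)/((0:ℕ):ℝ)) ≤ max 1 ‖A‖
      rw [Nat.cast_zero, div_zero, Real.rpow_zero]
      exact le_max_left _ _
    · have hmR : (0:ℝ) < (m:ℝ) := by exact_mod_cast hm
      have h1 : ‖A ^ m‖ ≤ (max 1 ‖A‖) ^ m :=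
        le_trans (mnorm_pow_le A m hm) (pow_le_pow_left₀ (norm_nonneg _) (le_max_right _ _) m)
      have h2 : u m ≤ ((max 1 ‖A‖) ^ m) ^ ((1:ℝ)/m) :=
        Real.rpow_le_rpow (norm_nonneg _) h1 (by positivity)
      have h3 : ((max 1 ‖A‖ : ℝ) ^ m) ^ ((1:ℝ)/m) = max 1 ‖A‖ := by
        rw [← Real.rpow_natCast (max 1 ‖A‖) m, ← Real.rpow_mul (by positivity)]
        rw [mul_one_div, div_self (ne_of_gt hmR), Real.rpow_one]
      rw [h3] at h2
      exact h2
  have hev : ∀ᶠ m in atTop, u m < mu := eventually_lt_of_limsup_lt h hbdd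
  rw [eventually_atTop] at hev
  obtain ⟨M, hM⟩ := hev
  set K : ℝ := 1 + ∑ m ∈ Finset.range (M+1), ‖A ^ m‖ / mu ^ m with hK
  have hterm : ∀ m, 0 ≤ ‖A ^ m‖ / mu ^ m := fun m => by positivity
  refine ⟨K, le_add_of_nonneg_right (Finset.sum_nonneg fun m _ => hterm m), fun m => ?_⟩
  have hKge : ∀ m ≤ M, ‖A ^ m‖ / mu ^ m ≤ K := by
    intro m hm
    calc ‖A ^ m‖ / mu ^ m ≤ ∑ k ∈ Finset.range (M+1), ‖A ^ k‖ / mu ^ k :=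
        Finset.single_le_sum (fun k _ => hterm k) (Finset.mem_range.2 (by omega))
      _ ≤ K := by rw [hK]; linarith
  rcases le_or_gt m M with hm | hm
  · have := hKge m hm
    rw [div_le_iff₀ (by positivity)] at this
    exact this
  · -- m ≥ M, use u m < mu
    have hum := hM m (by omega)
    have hm1 : (1:ℕ) ≤ m := by omega
    have hmR : (0:ℝ) < (m:ℝ) := by exact_mod_cast hm1
    have h2 : ‖A ^ m‖ = (u m) ^ (m:ℝ) := by
      show ‖A ^ m‖ = (‖A ^ m‖ ^ ((1:ℝ)/m)) ^ (m:ℝ)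
      rw [← Real.rpow_mul (norm_nonneg _), one_div, inv_mul_cancel₀ (ne_of_gt hmR),
        Real.rpow_one]
    have h3 : (u m) ^ (m:ℝ) ≤ mu ^ (m:ℝ) :=
      Real.rpow_le_rpow (Real.rpow_nonneg (norm_nonneg _) _) (le_of_lt hum) (le_of_lt hmR)
    have h4 : (mu : ℝ) ^ (m:ℝ) = mu ^ m := Real.rpow_natCast mu m
    calc ‖A ^ m‖ ≤ mu ^ m := by rw [h2, ← h4]; exact h3
      _ ≤ K * mu ^ m := le_mul_of_one_le_left (by positivity)
          (le_add_of_nonneg_right (Finset.sum_nonneg fun k _ => hterm k))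

end Gelfand

section Graph
variable {n : ℕ} {P : Matrix (Fin n) (Fin n) ℝ}

lemma access_trans {i j k : Fin n} (h1 : Access P i j) (h2 : Access P j k) : Access P i k :=
  Relation.ReflTransGen.trans h1 h2

lemma access_of_pos {i j : Fin n} (h : 0 < P i j) : Access P i j :=
  Relation.ReflTransGen.single h

lemma classMatrix_nonneg (hP : ∀ i j, 0 ≤ P i j) (i a b : Fin n) :
    0 ≤ classMatrix P i a b := by
  unfold classMatrix; split <;> [exact hP a b; exact le_refl 0]

lemma classMatrix_le (hP : ∀ i j, 0 ≤ P i j) (i a b : Fin n) :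
    classMatrix P i a b ≤ P a b := by
  unfold classMatrix; split <;> [exact le_refl _; exact hP a b]

lemma classMatrix_eq_of_mem {i a b : Fin n} (ha : Access P i a ∧ Access P a i)
    (hb : Access P i b ∧ Access P b i) : classMatrix P i a b = P a b := by
  unfold classMatrix; rw [if_pos ⟨ha, hb⟩]

lemma classMatrix_zero_left {i a : Fin n} (ha : ¬(Access P i a ∧ Access P a i)) (b : Fin n) :
    classMatrix P i a b = 0 := by
  unfold classMatrix; rw [if_neg (fun h => ha h.1)]

lemma classMatrix_zero_right {i b : Fin n} (hb : ¬(Access P i b ∧ Access P b i)) (a : Fin n) :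
    classMatrix P i a b = 0 := by
  unfold classMatrix; rw [if_neg (fun h => hb h.2)]

/-- rows of C^m vanish off the class, for m ≥ 1 -/
lemma classMatrix_pow_zero_left (i : Fin n) {a : Fin n}
    (ha : ¬(Access P i a ∧ Access P a i)) {m : ℕ} (hm : 1 ≤ m) (b : Fin n) :
    ((classMatrix P i) ^ m) a b = 0 := by
  obtain ⟨k, rfl⟩ : ∃ k, m = k + 1 := ⟨m - 1, by omega⟩
  rw [pow_succ', Matrix.mul_apply]
  refine Finset.sum_eq_zero fun j _ => ?_
  rw [classMatrix_zero_left ha, zero_mul]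

lemma classMatrix_pow_zero_right (i : Fin n) {b : Fin n}
    (hb : ¬(Access P i b ∧ Access P b i)) {m : ℕ} (hm : 1 ≤ m) (a : Fin n) :
    ((classMatrix P i) ^ m) a b = 0 := by
  obtain ⟨k, rfl⟩ : ∃ k, m = k + 1 := ⟨m - 1, by omega⟩
  rw [pow_succ, Matrix.mul_apply]
  refine Finset.sum_eq_zero fun j _ => ?_
  rw [classMatrix_zero_right hb, mul_zero]

/-- positivity of some power entry along an in-class path -/
lemma classMatrix_pow_pos (hP : ∀ i j, 0 ≤ P i j) (i : Fin n) {b : Fin n}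
    (hb : Access P i b ∧ Access P b i) :
    ∀ a, Access P a b → (Access P i a ∧ Access P a i) →
      ∃ m, 0 < ((classMatrix P i) ^ m) a b := by
  intro a hab
  induction hab using Relation.ReflTransGen.head_induction_on with
  | refl =>
    intro _
    exact ⟨0, by simp [Matrix.one_apply]⟩
  | @head a v hav hvb ih =>
    intro ha
    have hv : Access P i v ∧ Access P v i :=
      ⟨access_trans ha.1 (access_of_pos hav), access_trans hvb hb.2⟩
    obtain ⟨m, hm⟩ := ih hv
    refine ⟨m + 1, ?_⟩
    rw [pow_succ', Matrix.mul_apply]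
    have hterm : 0 < classMatrix P i a v * ((classMatrix P i) ^ m) v b := by
      apply mul_pos _ hm
      rw [classMatrix_eq_of_mem ha hv]; exact hav
    refine lt_of_lt_of_le hterm ?_
    refine Finset.single_le_sum (f := fun j => classMatrix P i a j * ((classMatrix P i) ^ m) j b)
      (fun j _ => mul_nonneg (classMatrix_nonneg hP i a j)
        (pow_entry_nonneg (classMatrix_nonneg hP i) m j b)) (Finset.mem_univ v)

/-- classes are "convex": any vertex on a path between two members is a member. -/
lemma mem_class_of_between {i a v : Fin n} (ha : Access P i a)
    (hav : Access P a v) (hvi : Access P v i) :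
    Access P i v ∧ Access P v i :=
  ⟨access_trans ha hav, hvi⟩

lemma mulVec_le_mulVec_of_le {A B : Matrix (Fin n) (Fin n) ℝ}
    (hAB : ∀ a c, A a c ≤ B a c) {x : Fin n → ℝ} (hx : ∀ i, 0 ≤ x i) (a : Fin n) :
    A.mulVec x a ≤ B.mulVec x a := by
  rw [Matrix.mulVec, dotProduct, Matrix.mulVec, dotProduct]
  exact Finset.sum_le_sum fun j _ => mul_le_mul_of_nonneg_right (hAB a j) (hx j)

end Graph

section Forward
variable {n : ℕ} {P : Matrix (Fin n) (Fin n) ℝ} {b : Fin n → ℝ} {lam : ℝ} {x : Fin n → ℝ}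

lemma sol_pos (hP : ∀ i j, 0 ≤ P i j) (hb : ∀ i, 0 ≤ b i) (hlam : 0 < lam)
    (hx : ∀ i, 0 ≤ x i) (hsol : ∀ j, lam * x j = P.mulVec x j + b j)
    {j' : Fin n} (hbj' : 0 < b j') : ∀ j, Access P j j' → 0 < x j := by
  intro j hacc
  induction hacc using Relation.ReflTransGen.head_induction_on with
  | refl =>
    have h1 : 0 < lam * x j' := by
      have := mulVec_nonneg hP hx j'
      rw [hsol j']; linarith
    nlinarith [hx j']
  | @head a c hac hcb ih =>
    have h1 : P a c * x c ≤ P.mulVec x a := by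
      rw [Matrix.mulVec, dotProduct]
      exact Finset.single_le_sum (f := fun j => P a j * x j)
        (fun j _ => mul_nonneg (hP a j) (hx j)) (Finset.mem_univ c)
    have h3 : 0 < P a c * x c := mul_pos hac ih
    have h2 : 0 < lam * x a := by rw [hsol a]; nlinarith [hb a]
    nlinarith [hx a]

/-- the key identity `lam^m x - C^m x = ∑_{k<m} lam^(m-1-k) C^k y` -/
lemma key_identity (C : Matrix (Fin n) (Fin n) ℝ) (x y : Fin n → ℝ)
    (hy : ∀ j, C.mulVec x j = lam * x j - y j) :
    ∀ m : ℕ, ∀ j, lam ^ m * x j - (C ^ m).mulVec x j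
      = ∑ k ∈ Finset.range m, lam ^ (m - 1 - k) * (C ^ k).mulVec y j := by
  intro m
  induction m with
  | zero => intro j; simp [Matrix.one_mulVec]
  | succ m ih =>
    intro j
    have hCx : C.mulVec x = fun j => lam * x j - y j := funext hy
    have h1 : (C ^ (m+1)).mulVec x = (C ^ m).mulVec (C.mulVec x) := by
      rw [Matrix.mulVec_mulVec, ← pow_succ]
    have h2 : (C ^ m).mulVec (C.mulVec x) j
        = lam * (C ^ m).mulVec x j - (C ^ m).mulVec y j := by
      rw [hCx]
      have : (fun j => lam * x j - y j) = (lam • x - y) := by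
        funext j; simp [Pi.smul_apply, smul_eq_mul]
      rw [this, Matrix.mulVec_sub, Matrix.mulVec_smul]
      simp [Pi.smul_apply, smul_eq_mul]
    have h3 : lam ^ (m+1) * x j - (C ^ (m+1)).mulVec x j
        = lam * (lam ^ m * x j - (C ^ m).mulVec x j) + (C ^ m).mulVec y j := by
      rw [h1, h2]; ring
    rw [h3, ih j, Finset.mul_sum, Finset.sum_range_succ]
    congr 1
    · refine Finset.sum_congr rfl fun k hk => ?_
      rw [Finset.mem_range] at hk
      rw [← mul_assoc, ← pow_succ']
      congr 2
      omega
    · rw [show m + 1 - 1 - m = 0 from by omega, pow_zero, one_mul]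

lemma forward_class (hP : ∀ i j, 0 ≤ P i j) (hb : ∀ i, 0 ≤ b i) (hlam : 0 < lam)
    (hx : ∀ i, 0 ≤ x i) (hsol : ∀ j, lam * x j = P.mulVec x j + b j)
    (i : Fin n) (hacc : ∃ j, 0 < b j ∧ Access P i j) :
    rho (classMatrix P i) < lam := by
  classical
  obtain ⟨jb, hjb, hijb⟩ := hacc
  set C := classMatrix P i with hC
  set cls : Fin n → Prop := fun a => Access P i a ∧ Access P a i with hcls
  have hCnn : ∀ a c, 0 ≤ C a c := classMatrix_nonneg hP i
  have hCle : ∀ a c, C a c ≤ P a c := classMatrix_le hP i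
  have hii : cls i := ⟨Relation.ReflTransGen.refl, Relation.ReflTransGen.refl⟩
  -- x positive on the class
  have hxpos : ∀ a, cls a → 0 < x a := fun a ha =>
    sol_pos hP hb hlam hx hsol hjb a (access_trans ha.2 hijb)
  -- the slack vector
  set y : Fin n → ℝ := fun j => lam * x j - C.mulVec x j with hy
  have hyx : ∀ j, C.mulVec x j = lam * x j - y j := fun j => by rw [hy]; ring
  have hyb : ∀ j, b j ≤ y j := by
    intro j
    have h1 : C.mulVec x j ≤ P.mulVec x j := mulVec_le_mulVec_of_le hCle hx j
    have h2 := hsol j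
    rw [hy]; dsimp only; linarith
  have hy0 : ∀ j, 0 ≤ y j := fun j => le_trans (hb j) (hyb j)
  -- a strictly positive slack coordinate in the class
  have hj0 : ∃ j0, cls j0 ∧ 0 < y j0 := by
    have hcase : ∀ a, Access P a jb → cls a →
        (∃ j, cls j ∧ 0 < b j) ∨
        (∃ u k, cls u ∧ ¬ cls k ∧ 0 < P u k ∧ Access P k jb) := by
      intro a hajb
      induction hajb using Relation.ReflTransGen.head_induction_on with
      | refl => intro ha; exact Or.inl ⟨jb, ha, hjb⟩
      | @head a c hac hcjb ih =>
        intro ha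
        by_cases hc : cls c
        · exact ih hc
        · exact Or.inr ⟨a, c, ha, hc, hac, hcjb⟩
    rcases hcase i hijb hii with ⟨j, hjcls, hjb'⟩ | ⟨u, k, hu, hk, huk, hkjb⟩
    · exact ⟨j, hjcls, lt_of_lt_of_le hjb' (hyb j)⟩
    · refine ⟨u, hu, ?_⟩
      have hxk : 0 < x k := sol_pos hP hb hlam hx hsol hjb k hkjb
      have hsum : C.mulVec x u + P u k * x k ≤ P.mulVec x u := by
        rw [Matrix.mulVec, dotProduct, Matrix.mulVec, dotProduct]
        have : ∀ j : Fin n, C u j * x j + (if j = k then P u k * x k else 0) ≤ P u j * x j := by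
          intro j
          by_cases hjk : j = k
          · subst hjk
            rw [if_pos rfl, hC, classMatrix_zero_right (show ¬(Access P i j ∧ Access P j i)
              from hk), zero_mul, zero_add]
          · rw [if_neg hjk, add_zero]
            exact mul_le_mul_of_nonneg_right (hCle u j) (hx j)
        calc ∑ j, C u j * x j + P u k * x k
            = ∑ j, (C u j * x j + if j = k then P u k * x k else 0) := by
              rw [Finset.sum_add_distrib, Finset.sum_ite_eq' Finset.univ k]
              simp
          _ ≤ ∑ j, P u j * x j := Finset.sum_le_sum fun j _ => this j
      have h2 := hsol u
      have h3 : 0 < P u k * x k := mul_pos huk hxk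
      have h4 := hb u
      rw [hy]; dsimp only; linarith
  obtain ⟨j0, hj0cls, hyj0⟩ := hj0
  -- for each class element, some iterate has positive slack
  have hkexists : ∀ j : Fin n, ∃ kk : ℕ, cls j → 0 < (C ^ kk).mulVec y j := by
    intro j
    by_cases hjcls : cls j
    · have hjj0 : Access P j j0 := access_trans hjcls.2 hj0cls.1
      obtain ⟨m, hm⟩ := classMatrix_pow_pos hP i hj0cls j hjj0 hjcls
      refine ⟨m, fun _ => ?_⟩
      have h1 : (C ^ m) j j0 * y j0 ≤ (C ^ m).mulVec y j := by
        rw [Matrix.mulVec, dotProduct]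
        exact Finset.single_le_sum (f := fun k => (C ^ m) j k * y k)
          (fun k _ => mul_nonneg (pow_entry_nonneg hCnn m j k) (hy0 k)) (Finset.mem_univ j0)
      exact lt_of_lt_of_le (mul_pos hm hyj0) h1
    · exact ⟨0, fun h => absurd h hjcls⟩
  choose kfun hkfun using hkexists
  set M : ℕ := (Finset.univ.sup kfun) + 1 with hM
  have hM1 : 1 ≤ M := Nat.le_add_left 1 _
  have key2 : ∀ j, cls j → (C ^ M).mulVec x j < lam ^ M * x j := by
    intro j hjcls
    have h1 := key_identity C x y hyx M j
    have h2 : lam ^ (M - 1 - kfun j) * (C ^ (kfun j)).mulVec y j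
        ≤ ∑ k ∈ Finset.range M, lam ^ (M - 1 - k) * (C ^ k).mulVec y j := by
      refine Finset.single_le_sum (f := fun k => lam ^ (M - 1 - k) * (C ^ k).mulVec y j)
        (fun k _ => mul_nonneg (le_of_lt (pow_pos hlam _))
          (mulVec_nonneg (pow_entry_nonneg hCnn k) hy0 j)) ?_
      rw [Finset.mem_range, hM]
      have := Finset.le_sup (f := kfun) (Finset.mem_univ j)
      omega
    have h3 : 0 < lam ^ (M - 1 - kfun j) * (C ^ (kfun j)).mulVec y j :=
      mul_pos (pow_pos hlam _) (hkfun j hjcls)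
    linarith
  -- contraction data
  have hne : (Finset.univ : Finset (Fin n)).Nonempty := ⟨i, Finset.mem_univ i⟩
  set c0 : ℝ := Finset.univ.sup' hne (fun j => if cls j then (C ^ M).mulVec x j / x j else 0)
    with hc0
  set c : ℝ := max c0 (lam ^ M / 2) with hcdef
  have hcpos : 0 < c := lt_of_lt_of_le (by positivity) (le_max_right _ _)
  have hclt : c < lam ^ M := by
    rw [hcdef, max_lt_iff]
    constructor
    · rw [hc0, Finset.sup'_lt_iff]
      intro j _
      by_cases hjcls : cls j
      · rw [if_pos hjcls, div_lt_iff₀ (hxpos j hjcls)]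
        calc (C ^ M).mulVec x j < lam ^ M * x j := key2 j hjcls
          _ = lam ^ M * x j := rfl
      · rw [if_neg hjcls]; positivity
    · have : 0 < lam ^ M := pow_pos hlam M
      linarith
  have hcx : ∀ j, cls j → (C ^ M).mulVec x j ≤ c * x j := by
    intro j hjcls
    have h1 : (C ^ M).mulVec x j / x j ≤ c0 := by
      have := Finset.le_sup' (f := fun j => if cls j then (C ^ M).mulVec x j / x j else 0)
        (Finset.mem_univ j)
      rw [if_pos hjcls] at this
      exact this.trans_eq hc0.symm
    have h2 : c0 ≤ c := le_max_left _ _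
    rw [div_le_iff₀ (hxpos j hjcls)] at h1
    calc (C ^ M).mulVec x j ≤ c0 * x j := h1
      _ ≤ c * x j := mul_le_mul_of_nonneg_right h2 (hx j)
  -- extended positive vector
  set xt : Fin n → ℝ := fun j => if cls j then x j else 1 with hxt
  have hxtpos : ∀ j, 0 < xt j := by
    intro j; rw [hxt]; dsimp only
    by_cases hjcls : cls j
    · rw [if_pos hjcls]; exact hxpos j hjcls
    · rw [if_neg hjcls]; norm_num
  have hBxt : ∀ j, (C ^ M).mulVec xt j ≤ c * xt j := by
    intro j
    by_cases hjcls : cls j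
    · have heq : (C ^ M).mulVec xt j = (C ^ M).mulVec x j := by
        rw [Matrix.mulVec, dotProduct, Matrix.mulVec, dotProduct]
        refine Finset.sum_congr rfl fun k _ => ?_
        by_cases hkcls : cls k
        · rw [hxt]; dsimp only; rw [if_pos hkcls]
        · rw [classMatrix_pow_zero_right i hkcls hM1, zero_mul, zero_mul]
      rw [heq, hxt]; dsimp only; rw [if_pos hjcls]
      exact hcx j hjcls
    · have heq : (C ^ M).mulVec xt j = 0 := by
        rw [Matrix.mulVec, dotProduct]
        refine Finset.sum_eq_zero fun k _ => ?_
        rw [classMatrix_pow_zero_left i hjcls hM1, zero_mul]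
      rw [heq]
      exact le_of_lt (mul_pos hcpos (hxtpos j))
  -- iterate the contraction
  have hq : ∀ q : ℕ, ∀ j, ((C ^ M) ^ q).mulVec xt j ≤ c ^ q * xt j := by
    intro q
    induction q with
    | zero => intro j; simp [Matrix.one_mulVec]
    | succ q ih =>
      intro j
      have h1 : ((C ^ M) ^ (q+1)).mulVec xt = ((C ^ M) ^ q).mulVec ((C ^ M).mulVec xt) := by
        rw [Matrix.mulVec_mulVec, ← pow_succ]
      have hnnq : ∀ a b', 0 ≤ ((C ^ M) ^ q) a b' := by
        rw [← pow_mul]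
        exact pow_entry_nonneg hCnn _
      have h2 : ((C ^ M) ^ q).mulVec ((C ^ M).mulVec xt) j
          ≤ ((C ^ M) ^ q).mulVec (c • xt) j := by
        refine mulVec_mono hnnq (fun a => ?_) j
        have := hBxt a
        simpa [Pi.smul_apply, smul_eq_mul] using this
      have h3 : ((C ^ M) ^ q).mulVec (c • xt) j = c * ((C ^ M) ^ q).mulVec xt j := by
        rw [Matrix.mulVec_smul]; simp [Pi.smul_apply, smul_eq_mul]
      calc ((C ^ M) ^ (q+1)).mulVec xt j
          = ((C ^ M) ^ q).mulVec ((C ^ M).mulVec xt) j := by rw [h1]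
        _ ≤ c * ((C ^ M) ^ q).mulVec xt j := by rw [← h3]; exact h2
        _ ≤ c * (c ^ q * xt j) := mul_le_mul_of_nonneg_left (ih j) (le_of_lt hcpos)
        _ = c ^ (q+1) * xt j := by ring
  -- norm bound for powers that are multiples of M
  set mmin : ℝ := Finset.univ.inf' hne xt with hmmin
  set X : ℝ := Finset.univ.sup' hne xt with hX
  have hmminpos : 0 < mmin := by
    rw [hmmin, Finset.lt_inf'_iff]
    intro j _; exact hxtpos j
  have hXpos : 0 < X := lt_of_lt_of_le (hxtpos i) (Finset.le_sup' xt (Finset.mem_univ i))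
  set K : ℝ := max (X / mmin) 1 with hKdef
  have hK1 : 1 ≤ K := le_max_right _ _
  have hnormq : ∀ q : ℕ, ‖C ^ (M * q)‖ ≤ K * c ^ q := by
    intro q
    rw [pow_mul]
    refine norm_le_of_row_sums (by positivity) fun a => ?_
    have h1 : ∑ k, ‖((C ^ M) ^ q) a k‖ = ∑ k, ((C ^ M) ^ q) a k := by
      refine Finset.sum_congr rfl fun k _ => ?_
      rw [Real.norm_eq_abs, abs_of_nonneg]
      rw [← pow_mul]; exact pow_entry_nonneg hCnn _ a k
    have hnnq : ∀ a' b', 0 ≤ ((C ^ M) ^ q) a' b' := by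
      rw [← pow_mul]; exact pow_entry_nonneg hCnn _
    have h2 : ∑ k, ((C ^ M) ^ q) a k ≤ (((C ^ M) ^ q).mulVec xt a) / mmin := by
      rw [le_div_iff₀ hmminpos, Finset.sum_mul]
      rw [Matrix.mulVec, dotProduct]
      refine Finset.sum_le_sum fun k _ => ?_
      refine mul_le_mul_of_nonneg_left ?_ (hnnq a k)
      exact le_trans (Finset.inf'_le xt (Finset.mem_univ k)) (le_refl _)
    have hnum : ((C ^ M) ^ q).mulVec xt a ≤ c ^ q * X := by
      calc ((C ^ M) ^ q).mulVec xt a ≤ c ^ q * xt a := hq q a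
        _ ≤ c ^ q * X := by
            refine mul_le_mul_of_nonneg_left ?_ (by positivity)
            exact Finset.le_sup' xt (Finset.mem_univ a)
    have h3 := mul_le_mul_of_nonneg_right hnum (le_of_lt (inv_pos.mpr hmminpos))
    rw [← div_eq_mul_inv, ← div_eq_mul_inv] at h3
    calc ∑ k, ‖((C ^ M) ^ q) a k‖ = ∑ k, ((C ^ M) ^ q) a k := h1
      _ ≤ c ^ q * X / mmin := le_trans h2 h3
      _ = (X / mmin) * c ^ q := by ring
      _ ≤ K * c ^ q := mul_le_mul_of_nonneg_right (le_max_left _ _) (by positivity)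
  -- convert to a bound `‖C^m‖ ≤ K₃ d^m`
  set d : ℝ := c ^ ((1:ℝ) / M) with hd
  have hMR : (0:ℝ) < (M:ℝ) := by exact_mod_cast hM1
  have hdpos : 0 < d := Real.rpow_pos_of_pos hcpos _
  have hdM : d ^ M = c := by
    rw [hd, ← Real.rpow_natCast (c ^ ((1:ℝ)/M)) M, ← Real.rpow_mul (le_of_lt hcpos),
      one_div, inv_mul_cancel₀ (ne_of_gt hMR), Real.rpow_one]
  have hdlam : d < lam := by
    have h1 : d < (lam ^ M) ^ ((1:ℝ)/M) := by
      rw [hd]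
      exact Real.rpow_lt_rpow (le_of_lt hcpos) hclt (by positivity)
    have h2 : ((lam ^ M : ℝ)) ^ ((1:ℝ)/M) = lam := by
      rw [← Real.rpow_natCast lam M, ← Real.rpow_mul (le_of_lt hlam),
        mul_one_div, div_self (ne_of_gt hMR), Real.rpow_one]
    rw [h2] at h1; exact h1
  set KC : ℝ := (max 1 ‖C‖) ^ M with hKC
  set E : ℝ := (max 1 d⁻¹) ^ M with hE
  have hKC1 : 1 ≤ KC := one_le_pow₀ (le_max_left _ _)
  have hE1 : 1 ≤ E := one_le_pow₀ (le_max_left _ _)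
  set K3 : ℝ := K * KC * E with hK3
  have hK31 : 1 ≤ K3 := by
    calc (1:ℝ) = 1 * 1 * 1 := by ring
      _ ≤ K * KC * E := by
        refine mul_le_mul (mul_le_mul hK1 hKC1 (by norm_num) (by linarith)) hE1 (by norm_num) ?_
        nlinarith
  have hfinal : ∀ m : ℕ, 1 ≤ m → ‖C ^ m‖ ≤ K3 * d ^ m := by
    intro m hm
    set q : ℕ := m / M with hqdef
    set r : ℕ := m % M with hrdef
    have hmqr : m = M * q + r := by rw [hqdef, hrdef]; exact (Nat.div_add_mod m M).symm
    have hrM : r < M := Nat.mod_lt m (by omega)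
    have hdq : c ^ q ≤ d ^ m * E := by
      have h1 : c ^ q = d ^ (M * q) := by rw [← hdM, ← pow_mul]
      have h2 : d ^ m = d ^ (M * q) * d ^ r := by rw [hmqr, pow_add]
      have h3 : d ^ (M*q) = d ^ m * (d⁻¹) ^ r := by
        rw [h2]; field_simp
        rw [one_div, ← mul_pow, mul_inv_cancel₀ (ne_of_gt hdpos), one_pow]
      rw [h1, h3]
      refine mul_le_mul_of_nonneg_left ?_ (by positivity)
      calc (d⁻¹) ^ r ≤ (max 1 d⁻¹) ^ r := by
            exact pow_le_pow_left₀ (by positivity) (le_max_right _ _) r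
        _ ≤ (max 1 d⁻¹) ^ M := pow_le_pow_right₀ (le_max_left _ _) (le_of_lt hrM)
        _ = E := rfl
    have hsplit : ‖C ^ m‖ ≤ ‖C ^ (M * q)‖ * KC := by
      rcases Nat.eq_zero_or_pos r with hr0 | hrpos
      · have : m = M * q := by omega
        rw [this]
        exact le_mul_of_one_le_right (norm_nonneg _) hKC1
      · have h1 : C ^ m = C ^ (M * q) * C ^ r := by rw [hmqr, pow_add]
        calc ‖C ^ m‖ = ‖C ^ (M * q) * C ^ r‖ := by rw [h1]
          _ ≤ ‖C ^ (M * q)‖ * ‖C ^ r‖ := Matrix.linfty_opNorm_mul _ _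
          _ ≤ ‖C ^ (M * q)‖ * KC := by
              refine mul_le_mul_of_nonneg_left ?_ (norm_nonneg _)
              calc ‖C ^ r‖ ≤ ‖C‖ ^ r := mnorm_pow_le C r hrpos
                _ ≤ (max 1 ‖C‖) ^ r := pow_le_pow_left₀ (norm_nonneg _) (le_max_right _ _) r
                _ ≤ (max 1 ‖C‖) ^ M := pow_le_pow_right₀ (le_max_left _ _) (le_of_lt hrM)
    calc ‖C ^ m‖ ≤ ‖C ^ (M * q)‖ * KC := hsplit
      _ ≤ (K * c ^ q) * KC := mul_le_mul_of_nonneg_right (hnormq q) (by positivity)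
      _ ≤ (K * (d ^ m * E)) * KC := by
          refine mul_le_mul_of_nonneg_right ?_ (by positivity)
          exact mul_le_mul_of_nonneg_left hdq (by positivity)
      _ = K3 * d ^ m := by rw [hK3, hKC, hE]; ring
  have := rho_le_of_norm_pow_le hK31 hdpos hfinal
  exact lt_of_le_of_lt this hdlam

end Forward

section Backward
variable {n : ℕ} {lam : ℝ}

lemma row_zero_pow {C : Matrix (Fin n) (Fin n) ℝ} {i : Fin n}
    (hrow : ∀ j, C i j = 0) {m : ℕ} (hm : 1 ≤ m) : ∀ k, (C ^ m) i k = 0 := by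
  obtain ⟨l, rfl⟩ : ∃ l, m = l + 1 := ⟨m - 1, by omega⟩
  intro k
  rw [pow_succ', Matrix.mul_apply]
  exact Finset.sum_eq_zero fun j _ => by rw [hrow j, zero_mul]

lemma solve_class (hlam : 0 < lam) (C : Matrix (Fin n) (Fin n) ℝ)
    (hC : ∀ i j, 0 ≤ C i j) (hrho : rho C < lam) (u : Fin n → ℝ) (hu : ∀ i, 0 ≤ u i) :
    ∃ w : Fin n → ℝ, (∀ i, 0 ≤ w i) ∧ (∀ i, lam * w i = C.mulVec w i + u i) ∧
      (∀ i, u i = 0 → (∀ j, C i j = 0) → w i = 0) := by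
  classical
  set mu : ℝ := max ((rho C + lam)/2) (lam/2) with hmu
  have hmupos : 0 < mu := lt_of_lt_of_le (by positivity) (le_max_right _ _)
  have hmulam : mu < lam := by
    rw [hmu, max_lt_iff]; constructor <;> linarith
  have hrhomu : rho C < mu := lt_of_lt_of_le (by linarith) (le_max_left _ _)
  obtain ⟨K, hK1, hKbound⟩ := exists_norm_pow_le hmupos hrhomu
  set t : Fin n → ℕ → ℝ := fun i m => (C ^ m).mulVec u i / lam ^ (m+1) with ht
  have htnonneg : ∀ i m, 0 ≤ t i m := fun i m => by
    have := mulVec_nonneg (pow_entry_nonneg hC m) hu i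
    positivity
  have htbound : ∀ i m, t i m ≤ (K * ‖u‖ / lam) * (mu / lam) ^ m := by
    intro i m
    have h1 : (C ^ m).mulVec u i ≤ ‖(C ^ m).mulVec u‖ := by
      refine le_trans (le_abs_self _) ?_
      rw [← Real.norm_eq_abs]
      exact norm_le_pi_norm _ i
    have h2 : ‖(C ^ m).mulVec u‖ ≤ ‖C ^ m‖ * ‖u‖ := Matrix.linfty_opNorm_mulVec _ _
    have h3 : ‖C ^ m‖ * ‖u‖ ≤ K * mu ^ m * ‖u‖ :=
      mul_le_mul_of_nonneg_right (hKbound m) (norm_nonneg _)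
    rw [ht]; dsimp only
    rw [div_le_iff₀ (by positivity)]
    have h4 : (K * ‖u‖ / lam) * (mu / lam) ^ m * lam ^ (m+1) = K * mu ^ m * ‖u‖ := by
      rw [div_pow, pow_succ]
      field_simp
    rw [h4]
    linarith
  have hsum : ∀ i, Summable (t i) := by
    intro i
    refine Summable.of_nonneg_of_le (htnonneg i) (htbound i) ?_
    exact (summable_geometric_of_lt_one (by positivity) (by
      rw [div_lt_one hlam]; exact hmulam)).mul_left _
  set w : Fin n → ℝ := fun i => ∑' m, t i m with hw
  have hwnonneg : ∀ i, 0 ≤ w i := fun i => tsum_nonneg (htnonneg i)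
  -- summability of the shifted series
  set a : Fin n → ℕ → ℝ := fun i m => (C ^ m).mulVec u i / lam ^ m with ha
  have hat : ∀ i m, a i m = lam * t i m := by
    intro i m
    rw [ha, ht]; dsimp only
    rw [pow_succ]
    field_simp
  have hasum : ∀ i, Summable (a i) := by
    intro i
    exact Summable.congr ((hsum i).mul_left lam) (fun m => (hat i m).symm)
  have hlamw : ∀ i, lam * w i = ∑' m, a i m := by
    intro i
    rw [hw]; dsimp only
    rw [← tsum_mul_left]
    exact tsum_congr fun m => (hat i m).symm
  have hCw : ∀ i, C.mulVec w i = ∑' m, a i (m + 1) := by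
    intro i
    rw [Matrix.mulVec, dotProduct]
    have h1 : ∀ j, C i j * w j = ∑' m, C i j * t j m := fun j => by
      rw [hw]; dsimp only; rw [tsum_mul_left]
    rw [Finset.sum_congr rfl (fun j _ => h1 j)]
    rw [← Summable.tsum_finsetSum (fun j _ => (hsum j).mul_left (C i j))]
    refine tsum_congr fun m => ?_
    rw [ha]; dsimp only
    have h2 : (C ^ (m+1)).mulVec u i = ∑ j, C i j * (C ^ m).mulVec u j := by
      rw [pow_succ', ← Matrix.mulVec_mulVec, Matrix.mulVec, dotProduct]
    rw [h2, Finset.sum_div]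
    refine Finset.sum_congr rfl fun j _ => ?_
    rw [ht]; dsimp only
    ring
  have heq : ∀ i, lam * w i = C.mulVec w i + u i := by
    intro i
    rw [hlamw i, hCw i, (hasum i).tsum_eq_zero_add]
    have h0 : a i 0 = u i := by
      rw [ha]; dsimp only
      simp [Matrix.one_mulVec]
    rw [h0]; ring
  refine ⟨w, hwnonneg, heq, ?_⟩
  intro i hui hrow
  rw [hw]; dsimp only
  have : ∀ m, t i m = 0 := by
    intro m
    rw [ht]; dsimp only
    rcases Nat.eq_zero_or_pos m with rfl | hm
    · simp [Matrix.one_mulVec, hui]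
    · have : (C ^ m).mulVec u i = 0 := by
        rw [Matrix.mulVec, dotProduct]
        exact Finset.sum_eq_zero fun k _ => by rw [row_zero_pow hrow hm k, zero_mul]
      rw [this, zero_div]
  simp [this]

end Backward

section Super
variable {n : ℕ} {P : Matrix (Fin n) (Fin n) ℝ} {b : Fin n → ℝ} {lam : ℝ}

lemma supersolution (hP : ∀ i j, 0 ≤ P i j) (hlam : 0 < lam)
    (hrho : ∀ i : Fin n, (∃ j, 0 < b j ∧ Access P i j) → rho (classMatrix P i) < lam) :
    ∀ N : ℕ, ∀ U : Finset (Fin n), U.card ≤ N →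
      (∀ i ∈ U, ∃ j, 0 < b j ∧ Access P i j) →
      (∀ i ∈ U, ∀ k, Access P i k → Access P k i → k ∈ U) →
      (∀ i ∈ U, ∀ j, 0 < P i j → (∃ j', 0 < b j' ∧ Access P j j') → j ∈ U) →
      ∃ z : Fin n → ℝ, (∀ i, 0 ≤ z i) ∧ (∀ i, i ∉ U → z i = 0) ∧
        (∀ i ∈ U, P.mulVec z i < lam * z i) := by
  classical
  intro N
  induction N with
  | zero =>
    intro U hcard _ _ _
    have hU : U = ∅ := Finset.card_eq_zero.mp (Nat.le_zero.mp hcard)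
    refine ⟨0, fun i => le_refl 0, fun i _ => rfl, fun i hi => ?_⟩
    rw [hU] at hi; exact absurd hi (Finset.notMem_empty i)
  | succ N ihN =>
    intro U hcard haccU hsatU hclosU
    rcases Finset.eq_empty_or_nonempty U with rfl | hUne
    · exact ihN ∅ (by simp) haccU hsatU hclosU
    obtain ⟨i0, hi0U, hi0min⟩ := Finset.exists_min_image U
      (fun i => (U.filter (fun j => Access P j i)).card) hUne
    set cls : Fin n → Prop := fun a => Access P i0 a ∧ Access P a i0 with hcls
    have hclsi0 : cls i0 := ⟨Relation.ReflTransGen.refl, Relation.ReflTransGen.refl⟩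
    have hclsU : ∀ a, cls a → a ∈ U := fun a ha => hsatU i0 hi0U a ha.1 ha.2
    -- key minimality claim
    have hkey : ∀ j ∈ U, Access P j i0 → Access P i0 j := by
      intro j hjU hji0
      by_contra hni0j
      have hsub : U.filter (fun k => Access P k j) ⊂ U.filter (fun k => Access P k i0) := by
        constructor
        · intro k hk
          rw [Finset.mem_filter] at hk ⊢
          exact ⟨hk.1, access_trans hk.2 hji0⟩
        · intro hsub'
          have h1 : i0 ∈ U.filter (fun k => Access P k i0) :=
            Finset.mem_filter.mpr ⟨hi0U, Relation.ReflTransGen.refl⟩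
          have h2 := hsub' h1
          rw [Finset.mem_filter] at h2
          exact hni0j h2.2
      have := Finset.card_lt_card hsub
      have := hi0min j hjU
      omega
    have hnoedge : ∀ i ∈ U, ¬ cls i → ∀ k, cls k → P i k = 0 := by
      intro i hiU hncls k hk
      by_contra hne
      have hpos : 0 < P i k := lt_of_le_of_ne (hP i k) (Ne.symm hne)
      have hii0 : Access P i i0 := access_trans (access_of_pos hpos) hk.2
      exact hncls ⟨hkey i hiU hii0, hii0⟩
    set U' : Finset (Fin n) := U.filter (fun a => ¬ cls a) with hU'
    have hU'card : U'.card ≤ N := by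
      have h1 : U' ⊂ U := by
        constructor
        · exact Finset.filter_subset _ _
        · intro hsub'
          have := hsub' (hclsU i0 hclsi0)
          rw [hU', Finset.mem_filter] at this
          exact this.2 hclsi0
      have := Finset.card_lt_card h1
      omega
    have hmemU' : ∀ i, i ∈ U' ↔ (i ∈ U ∧ ¬ cls i) := fun i => Finset.mem_filter
    obtain ⟨z', hz'0, hz'supp, hz'strict⟩ := ihN U' hU'card
      (fun i hi => haccU i ((hmemU' i).mp hi).1)
      (by
        intro i hi k hik hki
        rw [hmemU'] at hi ⊢
        refine ⟨hsatU i hi.1 k hik hki, fun hclsk => hi.2 ?_⟩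
        exact ⟨access_trans hclsk.1 hki, access_trans hik hclsk.2⟩)
      (by
        intro i hi j hij hjacc
        rw [hmemU'] at hi ⊢
        refine ⟨hclosU i hi.1 j hij hjacc, fun hclsj => ?_⟩
        exact hi.2 ⟨hkey i hi.1 (access_trans (access_of_pos hij) hclsj.2),
          access_trans (access_of_pos hij) hclsj.2⟩)
    -- solve on the class
    set C : Matrix (Fin n) (Fin n) ℝ := classMatrix P i0 with hCdef
    have hrhoC : rho C < lam := hrho i0 (haccU i0 hi0U)
    set u : Fin n → ℝ := fun k => if cls k then P.mulVec z' k + 1 else 0 with hu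
    have hu0 : ∀ k, 0 ≤ u k := by
      intro k
      rw [hu]; dsimp only
      by_cases hk : cls k
      · rw [if_pos hk]
        have := mulVec_nonneg hP hz'0 k
        linarith
      · rw [if_neg hk]
    obtain ⟨w, hw0, hweq, hwsupp⟩ := solve_class hlam C (classMatrix_nonneg hP i0) hrhoC u hu0
    have hwsupp' : ∀ k, ¬ cls k → w k = 0 := by
      intro k hk
      refine hwsupp k ?_ ?_
      · rw [hu]; dsimp only; rw [if_neg hk]
      · intro j
        exact classMatrix_zero_left (show ¬(Access P i0 k ∧ Access P k i0) from hk) j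
    refine ⟨fun i => z' i + w i, fun i => add_nonneg (hz'0 i) (hw0 i), ?_, ?_⟩
    · intro i hiU
      show z' i + w i = 0
      have h1 : z' i = 0 := hz'supp i (fun hi => hiU ((hmemU' i).mp hi).1)
      have h2 : w i = 0 := hwsupp' i (fun hcl => hiU (hclsU i hcl))
      rw [h1, h2, add_zero]
    · intro i hiU
      show P.mulVec (fun k => z' k + w k) i < lam * (z' i + w i)
      have hPadd : P.mulVec (fun k => z' k + w k) i = P.mulVec z' i + P.mulVec w i := by
        have : (fun k => z' k + w k) = z' + w := rfl
        rw [this, Matrix.mulVec_add]; rfl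
      by_cases hcl : cls i
      · -- in the class
        have hz'i : z' i = 0 := by
          refine hz'supp i ?_
          rw [hmemU']
          intro h; exact h.2 hcl
        have hPwC : P.mulVec w i = C.mulVec w i := by
          rw [Matrix.mulVec, dotProduct, Matrix.mulVec, dotProduct]
          refine Finset.sum_congr rfl fun k _ => ?_
          by_cases hk : cls k
          · rw [hCdef, classMatrix_eq_of_mem hcl hk]
          · rw [hwsupp' k hk, mul_zero, mul_zero]
        have hui : u i = P.mulVec z' i + 1 := by rw [hu]; dsimp only; rw [if_pos hcl]
        have h3 := hweq i
        rw [hui] at h3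
        calc P.mulVec (fun k => z' k + w k) i = P.mulVec z' i + P.mulVec w i := hPadd
          _ = P.mulVec z' i + C.mulVec w i := by rw [hPwC]
          _ < C.mulVec w i + (P.mulVec z' i + 1) := by linarith
          _ = lam * w i := h3.symm
          _ = lam * (z' i + w i) := by rw [hz'i]; ring
      · -- not in the class
        have hiU' : i ∈ U' := (hmemU' i).mpr ⟨hiU, hcl⟩
        have hwi : w i = 0 := hwsupp' i hcl
        have hPw0 : P.mulVec w i = 0 := by
          rw [Matrix.mulVec, dotProduct]
          refine Finset.sum_eq_zero fun k _ => ?_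
          by_cases hk : cls k
          · rw [hnoedge i hiU hcl k hk, zero_mul]
          · rw [hwsupp' k hk, mul_zero]
        calc P.mulVec (fun k => z' k + w k) i = P.mulVec z' i + P.mulVec w i := hPadd
          _ = P.mulVec z' i := by rw [hPw0, add_zero]
          _ < lam * z' i := hz'strict i hiU'
          _ = lam * (z' i + w i) := by rw [hwi, add_zero]

end Super

section Iterate
variable {n : ℕ} {P : Matrix (Fin n) (Fin n) ℝ} {b : Fin n → ℝ} {lam : ℝ}

lemma solution_of_supersolution (hP : ∀ i j, 0 ≤ P i j) (hb : ∀ i, 0 ≤ b i) (hlam : 0 < lam)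
    (Z : Fin n → ℝ) (hZ0 : ∀ i, 0 ≤ Z i) (hZ : ∀ i, P.mulVec Z i + b i ≤ lam * Z i) :
    ∃ x : Fin n → ℝ, (∀ i, 0 ≤ x i) ∧ ∀ i, lam * x i = P.mulVec x i + b i := by
  classical
  set seq : ℕ → Fin n → ℝ := fun k => Nat.rec (fun _ => 0)
    (fun _ s => fun i => (P.mulVec s i + b i) / lam) k with hseq
  have hseq0 : seq 0 = fun _ => 0 := rfl
  have hseqS : ∀ k, seq (k+1) = fun i => (P.mulVec (seq k) i + b i) / lam := fun k => rfl
  have h0 : ∀ k i, 0 ≤ seq k i := by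
    intro k
    induction k with
    | zero => intro i; rw [hseq0]
    | succ k ih =>
      intro i
      rw [hseqS k]
      have := mulVec_nonneg hP ih i
      have := hb i
      positivity
  have hmono : ∀ k i, seq k i ≤ seq (k+1) i := by
    intro k
    induction k with
    | zero =>
      intro i
      rw [hseq0]
      exact h0 1 i
    | succ k ih =>
      intro i
      rw [hseqS k, hseqS (k+1)]
      have h1 : P.mulVec (seq k) i ≤ P.mulVec (seq (k+1)) i := mulVec_mono hP ih i
      have h2 := mul_le_mul_of_nonneg_right (show P.mulVec (seq k) i + b i ≤
        P.mulVec (seq (k+1)) i + b i by linarith) (le_of_lt (inv_pos.mpr hlam))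
      rw [← div_eq_mul_inv, ← div_eq_mul_inv] at h2
      exact h2
  have hle : ∀ k i, seq k i ≤ Z i := by
    intro k
    induction k with
    | zero => intro i; rw [hseq0]; exact hZ0 i
    | succ k ih =>
      intro i
      rw [hseqS k]
      rw [div_le_iff₀ hlam]
      have h1 : P.mulVec (seq k) i ≤ P.mulVec Z i := mulVec_mono hP ih i
      have := hZ i
      nlinarith
  have hbdd : ∀ i, BddAbove (Set.range fun k => seq k i) := by
    intro i
    exact ⟨Z i, by rintro v ⟨k, rfl⟩; exact hle k i⟩
  set x : Fin n → ℝ := fun i => ⨆ k, seq k i with hx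
  have htend : ∀ i, Filter.Tendsto (fun k => seq k i) Filter.atTop (nhds (x i)) := by
    intro i
    exact tendsto_atTop_ciSup (monotone_nat_of_le_succ (fun k => hmono k i)) (hbdd i)
  have hxnonneg : ∀ i, 0 ≤ x i := by
    intro i
    have := le_ciSup (hbdd i) 0
    rw [hseq0] at this
    exact le_trans (le_refl 0) this
  refine ⟨x, hxnonneg, fun i => ?_⟩
  have h1 : Filter.Tendsto (fun k => seq (k+1) i) Filter.atTop (nhds (x i)) :=
    (htend i).comp (tendsto_add_atTop_nat 1)
  have h2 : Filter.Tendsto (fun k => (P.mulVec (seq k) i + b i) / lam) Filter.atTop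
      (nhds ((P.mulVec x i + b i) / lam)) := by
    have hsumt : Filter.Tendsto (fun k => P.mulVec (seq k) i) Filter.atTop
        (nhds (P.mulVec x i)) := by
      have : ∀ k, P.mulVec (seq k) i = ∑ j, P i j * seq k j := fun k => rfl
      have hx' : P.mulVec x i = ∑ j, P i j * x j := rfl
      rw [hx']
      refine tendsto_finset_sum _ fun j _ => ?_
      exact (htend j).const_mul (P i j)
    exact (hsumt.add_const (b i)).div_const lam
  have h3 : (fun k => seq (k+1) i) = fun k => (P.mulVec (seq k) i + b i) / lam := by
    funext k; rw [hseqS k]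
  rw [h3] at h1
  have h4 : x i = (P.mulVec x i + b i) / lam := tendsto_nhds_unique h1 h2
  rw [eq_div_iff (ne_of_gt hlam)] at h4
  linarith [h4]

end Iterate

theorem stmt6 {n : ℕ} (P : Matrix (Fin n) (Fin n) ℝ) (hP : ∀ i j, 0 ≤ P i j)
    (b : Fin n → ℝ) (hb : ∀ i, 0 ≤ b i) (lam : ℝ) (hlam : 0 < lam) :
    (∃ x : Fin n → ℝ, (∀ i, 0 ≤ x i) ∧
        (lam • (1 : Matrix (Fin n) (Fin n) ℝ) - P).mulVec x = b) ↔
      ∀ i : Fin n, (∃ j, 0 < b j ∧ Access P i j) → rho (classMatrix P i) < lam := by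
  classical
  have hconv : ∀ x : Fin n → ℝ,
      (lam • (1 : Matrix (Fin n) (Fin n) ℝ) - P).mulVec x = b ↔
      (∀ j, lam * x j = P.mulVec x j + b j) := by
    intro x
    constructor
    · intro h j
      have := congrFun h j
      rw [Matrix.sub_mulVec, Matrix.smul_mulVec, Matrix.one_mulVec] at this
      have h2 : lam * x j - P.mulVec x j = b j := by
        simpa [Pi.sub_apply, Pi.smul_apply, smul_eq_mul] using this
      linarith
    · intro h
      funext j
      rw [Matrix.sub_mulVec, Matrix.smul_mulVec, Matrix.one_mulVec]
      have := h j
      simp only [Pi.sub_apply, Pi.smul_apply, smul_eq_mul]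
      linarith
  constructor
  · rintro ⟨x, hx, heq⟩ i hacc
    exact forward_class hP hb hlam hx ((hconv x).mp heq) i hacc
  · intro hrho
    set T : Finset (Fin n) := Finset.univ.filter
      (fun i => ∃ j, 0 < b j ∧ Access P i j) with hT
    have hmemT : ∀ i, i ∈ T ↔ (∃ j, 0 < b j ∧ Access P i j) := by
      intro i
      rw [hT, Finset.mem_filter]
      simp
    obtain ⟨z, hz0, hzsupp, hzstrict⟩ := supersolution hP hlam hrho T.card T (le_refl _)
      (fun i hi => (hmemT i).mp hi)
      (by
        intro i hi k hik hki
        rw [hmemT] at hi ⊢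
        obtain ⟨j, hj, hij⟩ := hi
        exact ⟨j, hj, access_trans hki hij⟩)
      (by
        intro i hi j hij hjacc
        rw [hmemT]
        exact hjacc)
    -- scale the supersolution
    set g : Fin n → ℝ := fun i => lam * z i - P.mulVec z i with hg
    have hbT : ∀ i, i ∉ T → b i = 0 := by
      intro i hi
      by_contra hne
      have hpos : 0 < b i := lt_of_le_of_ne (hb i) (Ne.symm hne)
      exact hi ((hmemT i).mpr ⟨i, hpos, Relation.ReflTransGen.refl⟩)
    have hzT : ∀ i, i ∉ T → z i = 0 := hzsupp
    have hPzT : ∀ i, i ∉ T → P.mulVec z i = 0 := by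
      intro i hi
      rw [Matrix.mulVec, dotProduct]
      refine Finset.sum_eq_zero fun j _ => ?_
      by_cases hjT : j ∈ T
      · -- then P i j = 0, else i would be in T
        have : P i j = 0 := by
          by_contra hne
          have hpos : 0 < P i j := lt_of_le_of_ne (hP i j) (Ne.symm hne)
          obtain ⟨j', hj', hjj'⟩ := (hmemT j).mp hjT
          exact hi ((hmemT i).mpr ⟨j', hj', access_trans (access_of_pos hpos) hjj'⟩)
        rw [this, zero_mul]
      · rw [hzT j hjT, mul_zero]
    have hgpos : ∀ i ∈ T, 0 < g i := by
      intro i hi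
      rw [hg]; dsimp only
      have := hzstrict i hi
      linarith
    have hgnonneg : ∀ i, 0 ≤ b i / g i := by
      intro i
      by_cases hi : i ∈ T
      · exact div_nonneg (hb i) (le_of_lt (hgpos i hi))
      · rw [hbT i hi, zero_div]
    set c : ℝ := 1 + ∑ i, b i / g i with hc
    have hcpos : 0 < c := by
      rw [hc]
      have := Finset.sum_nonneg (fun i (_ : i ∈ Finset.univ) => hgnonneg i)
      linarith
    have hcge : ∀ i ∈ T, b i / g i ≤ c := by
      intro i _
      rw [hc]
      have h1 : b i / g i ≤ ∑ j, b j / g j :=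
        Finset.single_le_sum (fun j _ => hgnonneg j) (Finset.mem_univ i)
      linarith
    set Z : Fin n → ℝ := fun i => c * z i with hZdef
    have hZ0 : ∀ i, 0 ≤ Z i := fun i => mul_nonneg (le_of_lt hcpos) (hz0 i)
    have hPZ : ∀ i, P.mulVec Z i = c * P.mulVec z i := by
      intro i
      have : Z = c • z := rfl
      rw [this, Matrix.mulVec_smul]
      simp [smul_eq_mul]
    have hZsuper : ∀ i, P.mulVec Z i + b i ≤ lam * Z i := by
      intro i
      rw [hPZ i]
      by_cases hi : i ∈ T
      · have h1 : b i ≤ c * g i := by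
          have h2 := hcge i hi
          rw [div_le_iff₀ (hgpos i hi)] at h2
          linarith [h2]
        rw [hZdef]; dsimp only
        rw [hg] at h1; dsimp only at h1
        nlinarith [h1]
      · rw [hbT i hi, hPzT i hi, hZdef]
        dsimp only
        rw [hzT i hi]
        simp
    obtain ⟨x, hx0, hxeq⟩ := solution_of_supersolution hP hb hlam Z hZ0 hZsuper
    exact ⟨x, hx0, (hconv x).mpr hxeq⟩
end
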